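/- arXiv:2006.12450 — 6 statements merged into one kernel-verified Lean document; each statement's English description precedes it below -/
import Mathlib

section
/- Let U be a Polish space, G ⊆ C_b(U) an algebra of bounded continuous real-valued functions that strongly separates points, and ‖·‖_G a seminorm on G. Define d_G(μ,ν) := sup{ |∫ f dμ − ∫ f dν| / (‖f‖_∞ + ‖f‖_G) : f ∈ G, f ≠ 0 } for Borel probability measures μ, ν on U. Then d_G is a metric on the set of Borel probability measures on U: it is finite, symmetric, satisfies the triangle inequality, and d_G(μ,ν) = 0 if and only if μ = ν. -/
open MeasureTheory Filter
open scoped Topology ENNReal BoundedContinuousFunction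

/-- A set `G` of bounded continuous real-valued functions strongly separates points if for every
point `u` and every neighborhood `V` of `u` there is a finite `F ⊆ G` with
`inf_{u' ∉ V} max_{f ∈ F} |f u' - f u| > 0`. -/
def StronglySeparatesPoints {U : Type*} [TopologicalSpace U]
    (G : Set (BoundedContinuousFunction U ℝ)) : Prop :=
  ∀ (u : U) (V : Set U), V ∈ nhds u →
    ∃ F : Finset (BoundedContinuousFunction U ℝ), ↑F ⊆ G ∧
      ∃ ε : ℝ, 0 < ε ∧ ∀ u' ∉ V, ∃ f ∈ F, ε ≤ |f u' - f u|

/-- The metric `d_G` associated with a family `G ⊆ C_b(U)` and a seminorm `N` on it. -/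
noncomputable def dG {U : Type*} [TopologicalSpace U] [MeasurableSpace U]
    (G : Set (BoundedContinuousFunction U ℝ)) (N : BoundedContinuousFunction U ℝ → ℝ)
    (μ ν : Measure U) : ℝ :=
  sSup {r : ℝ | ∃ f ∈ G, f ≠ 0 ∧ r = |(∫ x, f x ∂μ) - ∫ x, f x ∂ν| / (‖f‖ + N f)}

noncomputable section StmtAux

namespace Stmt3Aux
open Set


lemma aux_tight {U : Type*} [TopologicalSpace U] [PolishSpace U] [MeasurableSpace U] [BorelSpace U]
    (μ : Measure U) [IsFiniteMeasure μ] {ε : ℝ≥0∞} (hε : 0 < ε) :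
    ∃ K : Set U, IsCompact K ∧ μ Kᶜ ≤ ε := by
  letI := TopologicalSpace.upgradeIsCompletelyMetrizable U
  rcases isEmpty_or_nonempty U with hU | hU
  · refine ⟨∅, isCompact_empty, ?_⟩
    simp [Set.eq_empty_of_isEmpty]
  obtain ⟨x, hx⟩ := TopologicalSpace.exists_dense_seq U
  have hBall : ∀ n : ℕ, (⋃ m : ℕ, ⋃ i ≤ m, Metric.closedBall (x i) ((n : ℝ) + 1)⁻¹) = univ := by
    intro n
    refine eq_univ_of_forall fun u => ?_
    have hpos : (0 : ℝ) < ((n : ℝ) + 1)⁻¹ := by positivity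
    obtain ⟨i, hi⟩ := Metric.denseRange_iff.mp hx u _ hpos
    exact mem_iUnion.2 ⟨i, mem_iUnion.2 ⟨i, mem_iUnion.2 ⟨le_rfl, Metric.mem_closedBall.2 (by
      exact (dist_comm u (x i) ▸ hi.le))⟩⟩⟩
  have hBcl : ∀ n m : ℕ, IsClosed (⋃ i ≤ m, Metric.closedBall (x i) ((n : ℝ) + 1)⁻¹) := by
    intro n m
    exact (Set.finite_Iic m).isClosed_biUnion fun i _ => Metric.isClosed_closedBall
  -- choose m n
  have key : ∀ n : ℕ, ∃ m : ℕ,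
      μ (⋃ i ≤ m, Metric.closedBall (x i) ((n : ℝ) + 1)⁻¹)ᶜ < ε * 2⁻¹ ^ (n + 1) := by
    intro n
    set B : ℕ → Set U := fun m => (⋃ i ≤ m, Metric.closedBall (x i) ((n : ℝ) + 1)⁻¹)ᶜ with hB
    have hmono : Antitone B := by
      intro a b hab
      apply compl_subset_compl.2
      exact Set.biUnion_subset_biUnion_left fun i hi => le_trans hi hab
    have hInter : ⋂ m, B m = ∅ := by
      rw [hB, ← compl_iUnion, hBall n, compl_univ]
    have htend : Tendsto (μ ∘ B) atTop (nhds (μ (⋂ m, B m))) := by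
      apply tendsto_measure_iInter_atTop
      · exact fun m => ((hBcl n m).isOpen_compl.measurableSet).nullMeasurableSet
      · exact hmono
      · exact ⟨0, measure_ne_top μ _⟩
    rw [hInter, measure_empty] at htend
    have hcpos : 0 < ε * 2⁻¹ ^ (n + 1) := by
      apply ENNReal.mul_pos hε.ne'
      simp [pow_ne_zero]
    exact (htend.eventually (Iio_mem_nhds hcpos)).exists
  choose m hm using key
  refine ⟨⋂ n, ⋃ i ≤ m n, Metric.closedBall (x i) ((n : ℝ) + 1)⁻¹, ?_, ?_⟩
  · apply TotallyBounded.isCompact_of_isClosed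
    · rw [Metric.totallyBounded_iff]
      intro δ hδ
      obtain ⟨n, hn⟩ := exists_nat_one_div_lt hδ
      refine ⟨x '' (Iic (m n)), (Set.finite_Iic (m n)).image x, ?_⟩
      intro u hu
      have hu' := mem_iInter.mp hu n
      obtain ⟨i, hi, hui⟩ := by
        simpa only [mem_iUnion, exists_prop] using hu'
      refine mem_iUnion.2 ⟨x i, mem_iUnion.2 ⟨⟨i, hi, rfl⟩, ?_⟩⟩
      have : ((n : ℝ) + 1)⁻¹ < δ := by
        rw [one_div] at hn; exact hn
      exact Metric.closedBall_subset_ball this hui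
    · exact isClosed_iInter fun n => hBcl n (m n)
  · rw [compl_iInter]
    refine le_trans (measure_iUnion_le _) ?_
    have hsum : ∑' n : ℕ, ε * 2⁻¹ ^ (n + 1) = ε := by
      rw [ENNReal.tsum_mul_left]
      have h2 : ∑' n : ℕ, (2⁻¹ : ℝ≥0∞) ^ (n + 1) = 1 := by
        have : ∀ n : ℕ, (2⁻¹ : ℝ≥0∞) ^ (n + 1) = 2⁻¹ * 2⁻¹ ^ n := fun n => by
          rw [pow_succ, mul_comm]
        rw [tsum_congr this, ENNReal.tsum_mul_left, ENNReal.tsum_geometric,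
          ENNReal.one_sub_inv_two, ENNReal.mul_inv_cancel (by simp) (by simp)]
      rw [h2, mul_one]
    calc ∑' n : ℕ, μ (⋃ i ≤ m n, Metric.closedBall (x i) ((n : ℝ) + 1)⁻¹)ᶜ
        ≤ ∑' n : ℕ, ε * 2⁻¹ ^ (n + 1) := ENNReal.tsum_le_tsum fun n => (hm n).le
      _ = ε := hsum


/-- clamp to [0,1] -/
def cl01 (t : ℝ) : ℝ := max 0 (min t 1)

lemma cl01_mem (t : ℝ) : cl01 t ∈ Set.Icc (0:ℝ) 1 :=
  ⟨le_max_left _ _, max_le (by norm_num) (min_le_right _ _)⟩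

lemma cl01_eq {t : ℝ} (h : t ∈ Set.Icc (0:ℝ) 1) : cl01 t = t := by
  rw [cl01, min_eq_left h.2, max_eq_right h.1]

lemma cl01_lip : LipschitzWith 1 cl01 := by
  apply LipschitzWith.of_dist_le_mul
  intro a b
  simp only [NNReal.coe_one, one_mul, Real.dist_eq]
  rw [cl01, cl01, max_comm 0 _, max_comm 0 _]
  refine le_trans (abs_max_sub_max_le_abs _ _ _) ?_
  refine le_trans (abs_min_sub_min_le_max a 1 b 1) ?_
  simp
lemma cl01_cont : Continuous cl01 := cl01_lip.continuous

def evalAlgHom' {U : Type*} [TopologicalSpace U] (x : U) : (U →ᵇ ℝ) →ₐ[ℝ] ℝ where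
  toFun f := f x
  map_one' := rfl
  map_mul' _ _ := rfl
  map_zero' := rfl
  map_add' _ _ := rfl
  commutes' _ := rfl

lemma aeval_apply {U : Type*} [TopologicalSpace U] (f : U →ᵇ ℝ) (p : Polynomial ℝ) (x : U) :
    (Polynomial.aeval f p) x = p.eval (f x) := by
  calc (Polynomial.aeval f p) x = evalAlgHom' x (Polynomial.aeval f p) := rfl
    _ = Polynomial.aeval (evalAlgHom' x f) p := (Polynomial.aeval_algHom_apply _ f p).symm
    _ = p.eval (f x) := by rw [Polynomial.coe_aeval_eq_eval]; rfl

lemma clamp_mem_closed_subalgebra {U : Type*} [TopologicalSpace U]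
    (T : Subalgebra ℝ (U →ᵇ ℝ)) (hT : IsClosed (T : Set (U →ᵇ ℝ)))
    {f : U →ᵇ ℝ} (hf : f ∈ T) :
    f.comp cl01 cl01_lip ∈ T := by
  have : (f.comp cl01 cl01_lip : U →ᵇ ℝ) ∈ closure (T : Set (U →ᵇ ℝ)) := by
    rw [Metric.mem_closure_iff]
    intro ε hε
    obtain ⟨p, hp⟩ := exists_polynomial_near_of_continuousOn (-(‖f‖+1)) (‖f‖+1) cl01
      cl01_cont.continuousOn (ε/2) (by positivity)
    refine ⟨(Polynomial.aeval (⟨f, hf⟩ : T) p : T), SetLike.coe_mem _, ?_⟩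
    have hcoe : ((Polynomial.aeval (⟨f, hf⟩ : T) p : T) : U →ᵇ ℝ) = Polynomial.aeval f p :=
      Polynomial.aeval_subalgebra_coe p T ⟨f, hf⟩
    rw [hcoe]
    have hle : dist (f.comp cl01 cl01_lip) (Polynomial.aeval f p) ≤ ε/2 := by
      refine BoundedContinuousFunction.dist_le (by positivity) |>.2 fun x => ?_
      rw [Real.dist_eq, aeval_apply]
      show |cl01 (f x) - p.eval (f x)| ≤ ε / 2
      have hx : f x ∈ Set.Icc (-(‖f‖+1)) (‖f‖+1) := by
        have := f.norm_coe_le_norm x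
        constructor <;> [linarith [abs_le.1 this]; linarith [(abs_le.1 this).2]]
      have := hp (f x) hx
      rw [abs_sub_comm]
      exact this.le
    exact lt_of_le_of_lt hle (by linarith)
  rwa [hT.closure_eq] at this



theorem measure_ext_of_algebra {U : Type*} [TopologicalSpace U] [PolishSpace U]
    [MeasurableSpace U] [BorelSpace U]
    (G : Set (U →ᵇ ℝ))
    (hadd : ∀ f ∈ G, ∀ g ∈ G, f + g ∈ G)
    (hmul : ∀ f ∈ G, ∀ g ∈ G, f * g ∈ G)
    (hsmul : ∀ (c : ℝ), ∀ f ∈ G, c • f ∈ G)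
    (hsep : StronglySeparatesPoints G)
    (μ ν : Measure U) [IsProbabilityMeasure μ] [IsProbabilityMeasure ν]
    (hint : ∀ f ∈ G, ∫ x, f x ∂μ = ∫ x, f x ∂ν) :
    μ = ν := by
  by_cases hsing : Subsingleton U
  · ext s hs
    rcases s.eq_empty_or_nonempty with rfl | ⟨u, hu⟩
    · simp
    · have hsu : s = univ := eq_univ_of_forall fun z => (Subsingleton.elim u z) ▸ hu
      rw [hsu]
      simp [measure_univ]
  have hnt : Nontrivial U := not_subsingleton_iff_nontrivial.mp hsing
  -- G is nonempty
  have hGne : G.Nonempty := by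
    by_contra hGe
    rw [Set.not_nonempty_iff_eq_empty] at hGe
    obtain ⟨x, y, hxy⟩ := hnt
    obtain ⟨F, hF, ε', hε', h⟩ := hsep x {y}ᶜ (compl_singleton_mem_nhds hxy)
    obtain ⟨f, hfF, -⟩ := h y (by simp)
    have := hF hfF
    rw [hGe] at this
    exact this
  have h0 : (0 : U →ᵇ ℝ) ∈ G := by
    obtain ⟨f, hf⟩ := hGne
    simpa using hsmul 0 f hf
  -- the unital algebra generated by G
  let A : Subalgebra ℝ (U →ᵇ ℝ) :=
    { carrier := {f | ∃ c : ℝ, ∃ g ∈ G, f = algebraMap ℝ (U →ᵇ ℝ) c + g}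
      mul_mem' := by
        rintro f₁ f₂ ⟨c₁, g₁, hg₁, rfl⟩ ⟨c₂, g₂, hg₂, rfl⟩
        refine ⟨c₁ * c₂, c₁ • g₂ + c₂ • g₁ + g₁ * g₂,
          hadd _ (hadd _ (hsmul c₁ g₂ hg₂) _ (hsmul c₂ g₁ hg₁)) _ (hmul _ hg₁ _ hg₂), ?_⟩
        ext x
        have hc : ∀ (c : ℝ), (algebraMap ℝ (U →ᵇ ℝ) c) x = c := fun c => rfl
        simp only [BoundedContinuousFunction.coe_add, BoundedContinuousFunction.coe_mul,
          BoundedContinuousFunction.coe_smul, Pi.add_apply, Pi.mul_apply, Pi.smul_apply,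
          smul_eq_mul, hc]
        ring
      one_mem' := ⟨1, 0, h0, by simp⟩
      add_mem' := by
        rintro f₁ f₂ ⟨c₁, g₁, hg₁, rfl⟩ ⟨c₂, g₂, hg₂, rfl⟩
        refine ⟨c₁ + c₂, g₁ + g₂, hadd _ hg₁ _ hg₂, by rw [map_add]; ring⟩
      zero_mem' := ⟨0, 0, h0, by simp⟩
      algebraMap_mem' := fun c => ⟨c, 0, h0, by simp⟩ }
  have hGA : G ⊆ (A : Set (U →ᵇ ℝ)) := fun g hg => ⟨0, g, hg, by simp⟩
  have halgmap : ∀ (c : ℝ) (x : U), (algebraMap ℝ (U →ᵇ ℝ) c) x = c := fun c x => rfl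
  have hAint : ∀ f ∈ A, ∫ x, f x ∂μ = ∫ x, f x ∂ν := by
    rintro f ⟨c, g, hg, rfl⟩
    have key : ∀ (σ : Measure U), IsProbabilityMeasure σ →
        ∫ x, (algebraMap ℝ (U →ᵇ ℝ) c + g) x ∂σ = c + ∫ x, g x ∂σ := by
      intro σ hσ
      have hco : ∀ x, (algebraMap ℝ (U →ᵇ ℝ) c + g) x = c + g x := fun x => rfl
      simp only [hco]
      rw [integral_add (integrable_const c) (g.integrable σ)]
      simp [measure_univ]
    rw [key μ ‹_›, key ν ‹_›, hint g hg]
  -- the closure T of A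
  set T := A.topologicalClosure with hT
  have hTclosed : IsClosed (T : Set (U →ᵇ ℝ)) := A.isClosed_topologicalClosure
  have hTint : ∀ f ∈ T, ∫ x, f x ∂μ = ∫ x, f x ∂ν := by
    have hLip : ∀ (σ : Measure U), IsProbabilityMeasure σ →
        Continuous fun f : U →ᵇ ℝ => ∫ x, f x ∂σ := by
      intro σ hσ
      refine LipschitzWith.continuous (K := 1) (LipschitzWith.of_dist_le_mul fun f g => ?_)
      rw [Real.dist_eq, NNReal.coe_one, one_mul, dist_eq_norm,
        ← integral_sub (f.integrable σ) (g.integrable σ)]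
      have hco : ∀ x, f x - g x = (f - g) x := fun x => rfl
      simp only [hco]
      exact (f - g).norm_integral_le_norm σ
    have hS : IsClosed {f : U →ᵇ ℝ | ∫ x, f x ∂μ = ∫ x, f x ∂ν} :=
      isClosed_eq (hLip μ ‹_›) (hLip ν ‹_›)
    intro f hf
    have : (T : Set (U →ᵇ ℝ)) ⊆ {f : U →ᵇ ℝ | ∫ x, f x ∂μ = ∫ x, f x ∂ν} := by
      rw [hT, Subalgebra.topologicalClosure_coe]
      exact closure_minimal hAint hS
    exact this hf
  -- step: integrals agree for all [0,1]-valued bcf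
  have claim01 : ∀ g : U →ᵇ ℝ, (∀ x, g x ∈ Icc (0:ℝ) 1) → ∫ x, g x ∂μ = ∫ x, g x ∂ν := by
    intro g hg01
    have habs : ∀ ε : ℝ, 0 < ε → |(∫ x, g x ∂μ) - ∫ x, g x ∂ν| ≤ 4 * ε := by
      intro ε hε
      obtain ⟨K₁, hK₁c, hK₁⟩ := aux_tight μ (ENNReal.ofReal_pos.2 hε)
      obtain ⟨K₂, hK₂c, hK₂⟩ := aux_tight ν (ENNReal.ofReal_pos.2 hε)
      set K := K₁ ∪ K₂ with hK
      have hKc : IsCompact K := hK₁c.union hK₂c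
      have hμK : μ Kᶜ ≤ ENNReal.ofReal ε :=
        le_trans (measure_mono (compl_subset_compl.2 subset_union_left)) hK₁
      have hνK : ν Kᶜ ≤ ENNReal.ofReal ε :=
        le_trans (measure_mono (compl_subset_compl.2 subset_union_right)) hK₂
      haveI : CompactSpace K := isCompact_iff_compactSpace.mp hKc
      -- restriction algebra homomorphism
      let ψ : (U →ᵇ ℝ) →ₐ[ℝ] C(K, ℝ) :=
        { toFun := fun f => (f : C(U, ℝ)).restrict K
          map_one' := rfl
          map_mul' := fun _ _ => rfl
          map_zero' := rfl
          map_add' := fun _ _ => rfl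
          commutes' := fun _ => rfl }
      have hψ : ∀ (f : U →ᵇ ℝ) (x : K), ψ f x = f (x : U) := fun f x => rfl
      have hsepK : (A.map ψ).SeparatesPoints := by
        rintro x y hxy
        have hxy' : (x : U) ≠ (y : U) := fun h => hxy (Subtype.ext h)
        obtain ⟨F, hF, ε', hε', h⟩ := hsep x {(y : U)}ᶜ (compl_singleton_mem_nhds hxy')
        obtain ⟨f, hfF, hfval⟩ := h y (by simp)
        refine ⟨⇑(ψ f), ⟨ψ f, Subalgebra.mem_map.2 ⟨f, hGA (hF hfF), rfl⟩, rfl⟩, ?_⟩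
        intro hEq
        rw [hψ f x, hψ f y] at hEq
        rw [hEq] at hfval
        simp at hfval
        linarith
      obtain ⟨h₀, hh₀⟩ := ContinuousMap.exists_mem_subalgebra_near_continuousMap_of_separatesPoints
        (A.map ψ) hsepK (ψ g) ε hε
      obtain ⟨f₀, hf₀A, hf₀⟩ := Subalgebra.mem_map.1 h₀.2
      set f₁ := f₀.comp cl01 cl01_lip with hf₁
      have hf₁T : f₁ ∈ T := clamp_mem_closed_subalgebra T hTclosed (A.le_topologicalClosure hf₀A)
      have hcloseK : ∀ x ∈ K, |f₁ x - g x| ≤ ε := by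
        intro x hx
        have e1 : f₁ x = cl01 (f₀ x) := rfl
        have e2 : g x = cl01 (g x) := (cl01_eq (hg01 x)).symm
        have e3 : |cl01 (f₀ x) - cl01 (g x)| ≤ |f₀ x - g x| := by
          have := cl01_lip.dist_le_mul (f₀ x) (g x)
          simpa [Real.dist_eq] using this
        have e4 : |f₀ x - g x| ≤ ε := by
          have : f₀ x - g x = ((h₀ : C(K, ℝ)) - ψ g) ⟨x, hx⟩ := by
            simp [← hf₀, hψ]
          rw [this]
          calc |((h₀ : C(K, ℝ)) - ψ g) ⟨x, hx⟩| ≤ ‖(h₀ : C(K, ℝ)) - ψ g‖ :=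
                ((h₀ : C(K, ℝ)) - ψ g).norm_coe_le_norm ⟨x, hx⟩
            _ ≤ ε := hh₀.le
        rw [e1, e2]
        exact le_trans e3 e4
      have hbound : ∀ x, |f₁ x - g x| ≤ 1 := by
        intro x
        have h1 : f₁ x ∈ Icc (0:ℝ) 1 := cl01_mem (f₀ x)
        have h2 := hg01 x
        rw [abs_sub_le_iff]
        constructor <;> [linarith [h1.2, h2.1]; linarith [h1.1, h2.2]]
      have hest : ∀ (σ : Measure U), IsProbabilityMeasure σ → σ Kᶜ ≤ ENNReal.ofReal ε →
          |(∫ x, g x ∂σ) - ∫ x, f₁ x ∂σ| ≤ 2 * ε := by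
        intro σ hσ hσK
        have hi : Integrable (fun x => g x - f₁ x) σ := (g.integrable σ).sub (f₁.integrable σ)
        rw [← integral_sub (g.integrable σ) (f₁.integrable σ)]
        have hKm : MeasurableSet K := hKc.isClosed.measurableSet
        rw [← integral_add_compl hKm hi]
        have h1 : |∫ x in K, (g x - f₁ x) ∂σ| ≤ ε * (σ K).toReal := by
          refine norm_setIntegral_le_of_norm_le_const (C := ε) (measure_lt_top σ K)
            (fun x hx => by rw [Real.norm_eq_abs, abs_sub_comm]; exact hcloseK x hx)
        have h2 : |∫ x in Kᶜ, (g x - f₁ x) ∂σ| ≤ 1 * (σ Kᶜ).toReal := by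
          refine norm_setIntegral_le_of_norm_le_const (C := 1) (measure_lt_top σ Kᶜ)
            (fun x _ => by rw [Real.norm_eq_abs, abs_sub_comm]; exact hbound x)
        have h3 : (σ K).toReal ≤ 1 := by
          have := ENNReal.toReal_mono (measure_ne_top σ univ) (measure_mono (subset_univ K))
          simpa [measure_univ] using this
        have h4 : (σ Kᶜ).toReal ≤ ε := by
          have := ENNReal.toReal_mono ENNReal.ofReal_ne_top hσK
          rwa [ENNReal.toReal_ofReal hε.le] at this
        refine le_trans (abs_add_le _ _) (le_trans (add_le_add h1 h2) ?_)
        nlinarith [h3, h4, hε.le, ENNReal.toReal_nonneg (a := σ K), ENNReal.toReal_nonneg (a := σ Kᶜ)]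
      have hf₁eq : ∫ x, f₁ x ∂μ = ∫ x, f₁ x ∂ν := hTint f₁ hf₁T
      calc |(∫ x, g x ∂μ) - ∫ x, g x ∂ν|
          ≤ |(∫ x, g x ∂μ) - ∫ x, f₁ x ∂μ| + |(∫ x, f₁ x ∂ν) - ∫ x, g x ∂ν| := by
            rw [← hf₁eq]
            have : (∫ x, g x ∂μ) - ∫ x, g x ∂ν =
                ((∫ x, g x ∂μ) - ∫ x, f₁ x ∂μ) + ((∫ x, f₁ x ∂μ) - ∫ x, g x ∂ν) := by ring
            rw [this]
            refine le_trans (abs_add_le _ _) ?_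
            rw [hf₁eq]
        _ ≤ 2 * ε + 2 * ε := by
            refine add_le_add (hest μ ‹_› hμK) ?_
            rw [abs_sub_comm]
            exact hest ν ‹_› hνK
        _ = 4 * ε := by ring
    have hz : |(∫ x, g x ∂μ) - ∫ x, g x ∂ν| ≤ 0 := by
      by_contra hcon
      push_neg at hcon
      have := habs (|(∫ x, g x ∂μ) - ∫ x, g x ∂ν| / 8) (by linarith)
      linarith
    have h0' : |(∫ x, g x ∂μ) - ∫ x, g x ∂ν| = 0 := le_antisymm hz (abs_nonneg _)
    linarith [sub_eq_zero.mp (abs_eq_zero.mp h0')]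
  -- all bounded continuous functions
  have claimAll : ∀ f : U →ᵇ ℝ, ∫ x, f x ∂μ = ∫ x, f x ∂ν := by
    intro f
    set M := ‖f‖ + 1 with hM
    have hMpos : (0:ℝ) < M := by positivity
    set g := (2*M)⁻¹ • (f + algebraMap ℝ (U →ᵇ ℝ) M) with hgdef
    have hgx : ∀ x, g x = (2*M)⁻¹ * (f x + M) := fun x => rfl
    have hg01 : ∀ x, g x ∈ Icc (0:ℝ) 1 := by
      intro x
      have hfx := abs_le.1 (f.norm_coe_le_norm x)
      rw [hgx]
      constructor
      · apply mul_nonneg (by positivity)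
        linarith [hfx.1]
      · rw [inv_mul_le_iff₀ (by positivity), mul_one]
        linarith [hfx.2]
    have hkey := claim01 g hg01
    have hintg : ∀ (σ : Measure U), IsProbabilityMeasure σ →
        ∫ x, g x ∂σ = (2*M)⁻¹ * ((∫ x, f x ∂σ) + M) := by
      intro σ hσ
      simp only [hgx]
      rw [integral_const_mul, integral_add (f.integrable σ) (integrable_const M)]
      simp [measure_univ]
    rw [hintg μ ‹_›, hintg ν ‹_›] at hkey
    have h2M : (2*M)⁻¹ ≠ 0 := by positivity
    have := mul_left_cancel₀ h2M hkey
    linarith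
  -- conclude via lintegrals of nonnegative bcf
  apply ext_of_forall_lintegral_eq_of_IsFiniteMeasure
  intro f
  have hIso : Isometry (NNReal.toReal) := fun _ => congrFun rfl
  set fr : U →ᵇ ℝ := f.comp NNReal.toReal hIso.lipschitz with hfr
  have hfrx : ∀ x, fr x = (f x : ℝ) := fun x => rfl
  have h1 := BoundedContinuousFunction.toReal_lintegral_coe_eq_integral f μ
  have h2 := BoundedContinuousFunction.toReal_lintegral_coe_eq_integral f ν
  have h3 : ∫ x, (f x : ℝ) ∂μ = ∫ x, (f x : ℝ) ∂ν := by
    have := claimAll fr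
    simpa only [hfrx] using this
  have hlt1 := f.lintegral_lt_top_of_nnreal (μ := μ)
  have hlt2 := f.lintegral_lt_top_of_nnreal (μ := ν)
  exact (ENNReal.toReal_eq_toReal_iff' hlt1.ne hlt2.ne).mp (by rw [h1, h2]; exact h3)

end Stmt3Aux
end StmtAux

/-- For an algebra `G ⊆ C_b(U)` strongly separating points of a Polish space `U`
and a seminorm `N = ‖·‖_G` on `G`, `d_G` is a metric on the Borel probability measures on `U`:
it is (finite and) nonnegative, symmetric, satisfies the triangle inequality, and vanishes
exactly on the diagonal. -/
theorem statement3 {U : Type*} [TopologicalSpace U] [PolishSpace U]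
    [MeasurableSpace U] [BorelSpace U]
    (G : Set (BoundedContinuousFunction U ℝ))
    (hadd : ∀ f ∈ G, ∀ g ∈ G, f + g ∈ G)
    (hmul : ∀ f ∈ G, ∀ g ∈ G, f * g ∈ G)
    (hsmul : ∀ (c : ℝ), ∀ f ∈ G, c • f ∈ G)
    (hsep : StronglySeparatesPoints G)
    (N : BoundedContinuousFunction U ℝ → ℝ)
    (hN0 : ∀ f ∈ G, 0 ≤ N f)
    (hNsmul : ∀ (c : ℝ), ∀ f ∈ G, N (c • f) = |c| * N f)
    (hNadd : ∀ f ∈ G, ∀ g ∈ G, N (f + g) ≤ N f + N g) :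
    (∀ (μ ν : Measure U), IsProbabilityMeasure μ → IsProbabilityMeasure ν →
        0 ≤ dG G N μ ν ∧ dG G N μ ν = dG G N ν μ) ∧
    (∀ (μ ν κ : Measure U), IsProbabilityMeasure μ → IsProbabilityMeasure ν →
        IsProbabilityMeasure κ → dG G N μ κ ≤ dG G N μ ν + dG G N ν κ) ∧
    (∀ (μ ν : Measure U), IsProbabilityMeasure μ → IsProbabilityMeasure ν →
        (dG G N μ ν = 0 ↔ μ = ν)) := by
  -- notation for the defining set
  set S : Measure U → Measure U → Set ℝ := fun μ ν =>
    {r : ℝ | ∃ f ∈ G, f ≠ 0 ∧ r = |(∫ x, f x ∂μ) - ∫ x, f x ∂ν| / (‖f‖ + N f)} with hS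
  have hdG : ∀ μ ν : Measure U, dG G N μ ν = sSup (S μ ν) := fun μ ν => rfl
  have hden : ∀ f ∈ G, f ≠ 0 → 0 < ‖f‖ + N f := by
    intro f hf hf0
    have := hN0 f hf
    have h2 : 0 < ‖f‖ := norm_pos_iff.2 hf0
    linarith
  have hnonneg : ∀ (μ ν : Measure U), ∀ r ∈ S μ ν, 0 ≤ r := by
    rintro μ ν r ⟨f, hf, hf0, rfl⟩
    exact div_nonneg (abs_nonneg _) (add_nonneg (norm_nonneg f) (hN0 f hf))
  have hbdd : ∀ (μ ν : Measure U), IsProbabilityMeasure μ → IsProbabilityMeasure ν →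
      ∀ r ∈ S μ ν, r ≤ 2 := by
    rintro μ ν hμ hν r ⟨f, hf, hf0, rfl⟩
    haveI := hμ; haveI := hν
    rw [div_le_iff₀ (hden f hf hf0)]
    have h1 : |(∫ x, f x ∂μ) - ∫ x, f x ∂ν| ≤ ‖f‖ + ‖f‖ := by
      refine le_trans (abs_sub _ _) (add_le_add ?_ ?_)
      · exact f.norm_integral_le_norm μ
      · exact f.norm_integral_le_norm ν
    have := hN0 f hf
    linarith
  have hBdd : ∀ (μ ν : Measure U), IsProbabilityMeasure μ → IsProbabilityMeasure ν →
      BddAbove (S μ ν) := fun μ ν hμ hν => ⟨2, fun r hr => hbdd μ ν hμ hν r hr⟩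
  have hnn : ∀ (μ ν : Measure U), 0 ≤ dG G N μ ν := fun μ ν =>
    Real.sSup_nonneg (hnonneg μ ν)
  have hsymm : ∀ (μ ν : Measure U), dG G N μ ν = dG G N ν μ := by
    intro μ ν
    rw [hdG, hdG]
    congr 1
    ext r
    constructor <;> rintro ⟨f, hf, hf0, rfl⟩ <;>
      exact ⟨f, hf, hf0, by rw [abs_sub_comm]⟩
  refine ⟨fun μ ν hμ hν => ⟨hnn μ ν, hsymm μ ν⟩, ?_, ?_⟩
  · -- triangle inequality
    intro μ ν κ hμ hν hκ
    rw [hdG]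
    refine Real.sSup_le ?_ (add_nonneg (hnn μ ν) (hnn ν κ))
    rintro r ⟨f, hf, hf0, rfl⟩
    have hD := hden f hf hf0
    calc |(∫ x, f x ∂μ) - ∫ x, f x ∂κ| / (‖f‖ + N f)
        ≤ (|(∫ x, f x ∂μ) - ∫ x, f x ∂ν| + |(∫ x, f x ∂ν) - ∫ x, f x ∂κ|) / (‖f‖ + N f) := by
          gcongr
          exact abs_sub_le _ _ _
      _ = |(∫ x, f x ∂μ) - ∫ x, f x ∂ν| / (‖f‖ + N f)
          + |(∫ x, f x ∂ν) - ∫ x, f x ∂κ| / (‖f‖ + N f) := add_div _ _ _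
      _ ≤ dG G N μ ν + dG G N ν κ := by
          refine add_le_add ?_ ?_
          · exact le_csSup (hBdd μ ν hμ hν) ⟨f, hf, hf0, rfl⟩
          · exact le_csSup (hBdd ν κ hν hκ) ⟨f, hf, hf0, rfl⟩
  · -- zero iff equal
    intro μ ν hμ hν
    haveI := hμ; haveI := hν
    constructor
    · intro hzero
      apply Stmt3Aux.measure_ext_of_algebra G hadd hmul hsmul hsep μ ν
      intro f hf
      by_cases hf0 : f = 0
      · subst hf0
        simp
      · have hmem : |(∫ x, f x ∂μ) - ∫ x, f x ∂ν| / (‖f‖ + N f) ∈ S μ ν := ⟨f, hf, hf0, rfl⟩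
        have hle : |(∫ x, f x ∂μ) - ∫ x, f x ∂ν| / (‖f‖ + N f) ≤ 0 := by
          rw [← hzero, hdG]
          exact le_csSup (hBdd μ ν hμ hν) hmem
        have hge := hnonneg μ ν _ hmem
        have heq : |(∫ x, f x ∂μ) - ∫ x, f x ∂ν| / (‖f‖ + N f) = 0 := le_antisymm hle hge
        rw [div_eq_zero_iff] at heq
        rcases heq with h | h
        · exact sub_eq_zero.mp (abs_eq_zero.mp h)
        · exact absurd h (hden f hf hf0).ne'
    · rintro rfl
      rw [hdG]
      refine le_antisymm (Real.sSup_le ?_ le_rfl) (Real.sSup_nonneg (hnonneg μ μ))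
      rintro r ⟨f, hf, hf0, rfl⟩
      simp
end

section
/- Let U be a Polish space, G ⊆ C_b(U) an algebra of bounded continuous real-valued functions that strongly separates points, and ‖·‖_G a seminorm on G, with d_G(μ,ν) := sup{ |∫ f dμ − ∫ f dν| / (‖f‖_∞ + ‖f‖_G) : f ∈ G, f ≠ 0 }. If (μ_n) and μ are Borel probability measures on U with d_G(μ_n, μ) → 0, then μ_n converges weakly to μ, i.e. ∫ f dμ_n → ∫ f dμ for every bounded continuous f : U → ℝ. -/
open MeasureTheory Filter
open scoped Topology ENNReal BoundedContinuousFunction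

namespace Statement4Aux

open BoundedContinuousFunction

variable {U : Type*} [TopologicalSpace U]

/-- Evaluation at a point, as an algebra homomorphism. -/
def evA (x : U) : (U →ᵇ ℝ) →ₐ[ℝ] ℝ where
  toFun f := f x
  map_one' := rfl
  map_mul' _ _ := rfl
  map_zero' := rfl
  map_add' _ _ := rfl
  commutes' r := by simp

@[simp] lemma evA_apply (x : U) (f : U →ᵇ ℝ) : evA x f = f x := rfl

/-- Pointwise absolute value of a bounded continuous function. -/
noncomputable def absB (f : U →ᵇ ℝ) : U →ᵇ ℝ :=
  BoundedContinuousFunction.comp norm lipschitzWith_one_norm f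

@[simp] lemma absB_apply (f : U →ᵇ ℝ) (x : U) : absB f x = |f x| := Real.norm_eq_abs (f x)

lemma real_min_eq (a b : ℝ) : min a b = 2⁻¹ * (a + b - |a - b|) := by
  rcases le_total a b with h | h
  · rw [min_eq_left h, abs_of_nonpos (by linarith)]; ring
  · rw [min_eq_right h, abs_of_nonneg (by linarith)]; ring

/-- Pointwise minimum of two bounded continuous functions. -/
noncomputable def minB (f g : U →ᵇ ℝ) : U →ᵇ ℝ :=
  (2⁻¹ : ℝ) • (f + g - absB (f - g))

lemma minB_apply (f g : U →ᵇ ℝ) (x : U) : minB f g x = min (f x) (g x) := by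
  have h1 : minB f g x = 2⁻¹ * (f x + g x - |f x - g x|) := by
    simp [minB, coe_smul, coe_sub, coe_add]
  rw [h1, ← real_min_eq]

/-- `aeval` at a bounded continuous function, evaluated at a point. -/
lemma aeval_apply (s : U →ᵇ ℝ) (p : Polynomial ℝ) (u : U) :
    Polynomial.aeval s p u = p.eval (s u) := by
  have h := Polynomial.aeval_algHom_apply (evA u) s p
  simp only [evA_apply] at h
  rw [← h, Polynomial.coe_aeval_eq_eval]

/-- The absolute value of an element of the closure of a subalgebra of `C_b(U, ℝ)` stays in
the closure. -/
theorem abs_mem_closure (T : Subalgebra ℝ (U →ᵇ ℝ)) {f : U →ᵇ ℝ}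
    (hf : f ∈ closure (T : Set (U →ᵇ ℝ))) : absB f ∈ closure (T : Set (U →ᵇ ℝ)) := by
  rw [Metric.mem_closure_iff]
  intro ε hε
  obtain ⟨s, hsT, hs⟩ := Metric.mem_closure_iff.1 hf (ε / 4) (by linarith)
  obtain ⟨p, hp⟩ := exists_polynomial_near_continuousMap (-‖s‖) ‖s‖
    ⟨fun t => |(t : ℝ)|, continuous_abs.comp continuous_subtype_val⟩ (ε / 4) (by linarith)
  have hpoly : ∀ y : ℝ, y ∈ Set.Icc (-‖s‖) ‖s‖ → abs (p.eval y - abs y) ≤ ε / 4 := by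
    intro y hy
    have h1 := ContinuousMap.norm_coe_le_norm
      (p.toContinuousMapOn (Set.Icc (-‖s‖) ‖s‖) -
        ⟨fun t => |(t : ℝ)|, continuous_abs.comp continuous_subtype_val⟩) ⟨y, hy⟩
    have h2 := h1.trans hp.le
    simpa [Real.norm_eq_abs, Polynomial.toContinuousMapOn_apply] using h2
  refine ⟨Polynomial.aeval s p, ?_, ?_⟩
  · exact (Algebra.adjoin_le (Set.singleton_subset_iff.2 hsT) :
      Algebra.adjoin ℝ {s} ≤ T) (Polynomial.aeval_mem_adjoin_singleton ℝ s)
  · have hb : dist (absB f) (Polynomial.aeval s p) ≤ ε / 4 + ε / 4 := by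
      rw [dist_le (by linarith)]
      intro x
      have hmem : s x ∈ Set.Icc (-‖s‖) ‖s‖ := by
        have h := abs_le.mp ((Real.norm_eq_abs (s x)) ▸ norm_coe_le_norm s x)
        exact ⟨h.1, h.2⟩
      have h1 : abs (abs (f x) - abs (s x)) ≤ ε / 4 := by
        have ha := abs_abs_sub_abs_le_abs_sub (f x) (s x)
        have h2 : |f x - s x| ≤ dist f s := by
          have := dist_coe_le_dist (f := f) (g := s) x
          simpa [Real.dist_eq] using this
        linarith
      have h2 := hpoly (s x) hmem
      have h3 : Polynomial.aeval s p x = p.eval (s x) := aeval_apply s p x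
      rw [Real.dist_eq, absB_apply, h3]
      have h5 : abs (abs (f x) - p.eval (s x)) ≤
          abs (abs (f x) - abs (s x)) + abs (abs (s x) - p.eval (s x)) :=
        abs_sub_le _ _ _
      have h4 : abs (abs (s x) - p.eval (s x)) ≤ ε / 4 := by rw [abs_sub_comm]; exact h2
      linarith
    linarith [hb]

theorem minB_mem_closure (T : Subalgebra ℝ (U →ᵇ ℝ)) {f g : U →ᵇ ℝ}
    (hf : f ∈ closure (T : Set (U →ᵇ ℝ))) (hg : g ∈ closure (T : Set (U →ᵇ ℝ))) :
    minB f g ∈ closure (T : Set (U →ᵇ ℝ)) := by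
  have hT : (T.topologicalClosure : Set (U →ᵇ ℝ)) = closure (T : Set (U →ᵇ ℝ)) :=
    Subalgebra.topologicalClosure_coe T
  have hf' : f ∈ T.topologicalClosure := by rw [← SetLike.mem_coe, hT]; exact hf
  have hg' : g ∈ T.topologicalClosure := by rw [← SetLike.mem_coe, hT]; exact hg
  have habs : absB (f - g) ∈ T.topologicalClosure := by
    rw [← SetLike.mem_coe, hT]
    apply abs_mem_closure T
    rw [← hT]
    exact SetLike.mem_coe.2 (sub_mem hf' hg')
  have hmem : minB f g ∈ T.topologicalClosure :=
    Subalgebra.smul_mem _ (sub_mem (add_mem hf' hg') habs) _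
  rw [← SetLike.mem_coe, hT] at hmem
  exact hmem

/-- Finite infima of elements of the closure of a subalgebra can be realized inside
the closure. -/
theorem finInf_mem (T : Subalgebra ℝ (U →ᵇ ℝ)) {ι : Type*} (g : ι → (U →ᵇ ℝ))
    (t : Finset ι) (ht : t.Nonempty) :
    (∀ i ∈ t, g i ∈ closure (T : Set (U →ᵇ ℝ))) →
      ∃ W : U →ᵇ ℝ, W ∈ closure (T : Set (U →ᵇ ℝ)) ∧
        ∀ u : U, W u = t.inf' ht fun i => g i u := by
  induction ht using Finset.Nonempty.cons_induction with
  | singleton i =>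
    intro hg
    exact ⟨g i, hg i (by simp), fun u => by simp⟩
  | cons a s ha hs ih =>
    intro hg
    obtain ⟨W, hWmem, hWval⟩ := ih fun i hi => hg i (Finset.mem_cons_of_mem hi)
    refine ⟨minB (g a) W, minB_mem_closure T (hg a (Finset.mem_cons_self a s)) hWmem,
      fun u => ?_⟩
    rw [minB_apply, hWval u, Finset.inf'_cons]

/-- Convergence of integrals passes to uniform limits. -/
theorem tendsto_of_mem_closure [MeasurableSpace U] [OpensMeasurableSpace U]
    (μ : ℕ → Measure U) (ν : Measure U) [∀ n, IsProbabilityMeasure (μ n)]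
    [IsProbabilityMeasure ν] (T : Set (U →ᵇ ℝ))
    (hT : ∀ s ∈ T, Tendsto (fun n => ∫ x, s x ∂(μ n)) atTop (𝓝 (∫ x, s x ∂ν)))
    {f : U →ᵇ ℝ} (hf : f ∈ closure T) :
    Tendsto (fun n => ∫ x, f x ∂(μ n)) atTop (𝓝 (∫ x, f x ∂ν)) := by
  rw [Metric.tendsto_atTop]
  intro ε hε
  obtain ⟨s, hsT, hs⟩ := Metric.mem_closure_iff.1 hf (ε / 4) (by linarith)
  obtain ⟨n₀, hn₀⟩ := Metric.tendsto_atTop.1 (hT s hsT) (ε / 4) (by linarith)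
  refine ⟨n₀, fun n hn => ?_⟩
  have key : ∀ (m : Measure U), IsProbabilityMeasure m →
      dist (∫ x, f x ∂m) (∫ x, s x ∂m) ≤ ε / 4 := by
    intro m hm
    have h1 : ∫ x, (f - s) x ∂m = (∫ x, f x ∂m) - ∫ x, s x ∂m := by
      simp only [coe_sub, Pi.sub_apply]
      exact integral_sub (f.integrable m) (s.integrable m)
    rw [Real.dist_eq, ← h1]
    have h2 : ‖∫ x, (f - s) x ∂m‖ ≤ ‖f - s‖ := (f - s).norm_integral_le_norm m
    rw [Real.norm_eq_abs] at h2
    have h3 : ‖f - s‖ = dist f s := (dist_eq_norm f s).symm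
    rw [h3] at h2
    linarith
  calc dist (∫ x, f x ∂μ n) (∫ x, f x ∂ν)
      ≤ dist (∫ x, f x ∂μ n) (∫ x, s x ∂μ n) + dist (∫ x, s x ∂μ n) (∫ x, s x ∂ν)
        + dist (∫ x, s x ∂ν) (∫ x, f x ∂ν) := dist_triangle4 _ _ _ _
    _ < ε := by
        have k1 := key (μ n) inferInstance
        have k2 := hn₀ n hn
        have k3 : dist (∫ x, s x ∂ν) (∫ x, f x ∂ν) ≤ ε / 4 := by
          rw [dist_comm]; exact key ν inferInstance
        linarith

/-- Tightness of a probability measure on a complete second-countable metric space. -/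
theorem exists_compact_compl_le {X : Type*} [MetricSpace X] [CompleteSpace X]
    [SecondCountableTopology X] [Nonempty X] [MeasurableSpace X] [OpensMeasurableSpace X]
    (ν : Measure X) [IsProbabilityMeasure ν] {ε : ℝ≥0∞} (hε : ε ≠ 0) :
    ∃ K : Set X, IsCompact K ∧ ν Kᶜ ≤ ε := by
  obtain ⟨δ, δpos, hδsum⟩ := ENNReal.exists_pos_sum_of_countable hε ℕ
  set z : ℕ → X := TopologicalSpace.denseSeq X with hz_def
  have hz : DenseRange z := TopologicalSpace.denseRange_denseSeq X
  set A : ℕ → ℕ → Set X :=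
    fun m n => ⋃ k ∈ Set.Iic n, Metric.closedBall (z k) ((m + 1 : ℝ)⁻¹) with hA_def
  have hAclosed : ∀ m n, IsClosed (A m n) := fun m n =>
    (Set.finite_Iic n).isClosed_biUnion fun k _ => Metric.isClosed_closedBall
  have hAmono : ∀ m, Monotone (A m) := fun m a b hab =>
    Set.biUnion_subset_biUnion_left (Set.Iic_subset_Iic.2 hab)
  have hAunion : ∀ m, (⋃ n, A m n) = Set.univ := by
    intro m
    ext x
    simp only [Set.mem_iUnion, Set.mem_univ, iff_true]
    obtain ⟨k, hk⟩ := hz.exists_dist_lt x (show (0 : ℝ) < (m + 1 : ℝ)⁻¹ by positivity)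
    exact ⟨k, Set.mem_biUnion (Set.mem_Iic.2 le_rfl) (Metric.mem_closedBall.2 hk.le)⟩
  have key : ∀ m : ℕ, ∃ n, ν (A m n)ᶜ ≤ δ m := by
    intro m
    have h1 : Tendsto (fun n => ν (A m n)) atTop (𝓝 (ν (⋃ n, A m n))) :=
      tendsto_measure_iUnion_atTop (hAmono m)
    rw [hAunion m, measure_univ] at h1
    have hlt : (1 : ℝ≥0∞) - δ m < 1 :=
      ENNReal.sub_lt_self ENNReal.one_ne_top one_ne_zero (by exact_mod_cast (δpos m).ne')
    obtain ⟨n, hn⟩ := (h1.eventually_const_lt hlt).exists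
    refine ⟨n, ?_⟩
    have hcompl : ν (A m n)ᶜ = 1 - ν (A m n) := by
      rw [measure_compl (hAclosed m n).measurableSet (measure_ne_top ν _), measure_univ]
    rw [hcompl]
    calc (1 : ℝ≥0∞) - ν (A m n) ≤ 1 - (1 - δ m) := tsub_le_tsub_left hn.le 1
      _ ≤ δ m := tsub_le_iff_right.2 le_add_tsub
  choose nm hnm using key
  refine ⟨⋂ m, A m (nm m), ?_, ?_⟩
  · apply TotallyBounded.isCompact_of_isClosed
    · rw [Metric.totallyBounded_iff]
      intro r hr
      obtain ⟨m, hm⟩ : ∃ m : ℕ, ((m : ℝ) + 1)⁻¹ < r := by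
        obtain ⟨m, hm⟩ := exists_nat_gt r⁻¹
        refine ⟨m, ?_⟩
        have h1 : r⁻¹ < (m : ℝ) + 1 := hm.trans (lt_add_one _)
        have h2 : ((m : ℝ) + 1)⁻¹ < (r⁻¹)⁻¹ := by
          apply inv_strictAnti₀ (inv_pos.2 hr) h1
        rwa [inv_inv] at h2
      refine ⟨z '' Set.Iic (nm m), (Set.finite_Iic _).image z, ?_⟩
      intro x hx
      have hxm : x ∈ A m (nm m) := Set.mem_iInter.1 hx m
      obtain ⟨k, hk, hball⟩ := Set.mem_iUnion₂.1 hxm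
      exact Set.mem_biUnion (Set.mem_image_of_mem z hk)
        (Metric.closedBall_subset_ball hm hball)
    · exact isClosed_iInter fun m => hAclosed m (nm m)
  · rw [Set.compl_iInter]
    calc ν (⋃ m, (A m (nm m))ᶜ) ≤ ∑' m, ν (A m (nm m))ᶜ := measure_iUnion_le _
      _ ≤ ∑' m, (δ m : ℝ≥0∞) := ENNReal.tsum_le_tsum hnm
      _ ≤ ε := hδsum.le

/-- The subalgebra generated by a set `G` closed under the algebra operations,
together with the constants. -/
def mkS (G : Set (U →ᵇ ℝ))
    (hadd : ∀ f ∈ G, ∀ g ∈ G, f + g ∈ G)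
    (hmul : ∀ f ∈ G, ∀ g ∈ G, f * g ∈ G)
    (hsmul : ∀ (c : ℝ), ∀ f ∈ G, c • f ∈ G)
    (h0 : (0 : U →ᵇ ℝ) ∈ G) : Subalgebra ℝ (U →ᵇ ℝ) where
  carrier := {f | ∃ g ∈ G, ∃ c : ℝ, f = g + const U c}
  add_mem' := by
    rintro a b ⟨g, hg, c, rfl⟩ ⟨g', hg', c', rfl⟩
    refine ⟨g + g', hadd _ hg _ hg', c + c', ?_⟩
    ext u
    simp
    ring
  mul_mem' := by
    rintro a b ⟨g, hg, c, rfl⟩ ⟨g', hg', c', rfl⟩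
    refine ⟨g * g' + (c • g' + c' • g),
      hadd _ (hmul _ hg _ hg') _ (hadd _ (hsmul c _ hg') _ (hsmul c' _ hg)),
      c * c', ?_⟩
    ext u
    simp
    ring
  zero_mem' := ⟨0, h0, 0, by ext u; simp⟩
  one_mem' := ⟨0, h0, 1, by ext u; simp⟩
  algebraMap_mem' := fun r => ⟨0, h0, r, by ext u; simp⟩

end Statement4Aux

open Statement4Aux BoundedContinuousFunction

/-- For an algebra `G ⊆ C_b(U)` strongly separating points of a Polish space `U`
and a seminorm `N = ‖·‖_G` on `G`: convergence of Borel probability measures in the metric `d_G`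
implies weak convergence. -/
theorem statement4 {U : Type*} [TopologicalSpace U] [PolishSpace U]
    [MeasurableSpace U] [BorelSpace U]
    (G : Set (BoundedContinuousFunction U ℝ))
    (hadd : ∀ f ∈ G, ∀ g ∈ G, f + g ∈ G)
    (hmul : ∀ f ∈ G, ∀ g ∈ G, f * g ∈ G)
    (hsmul : ∀ (c : ℝ), ∀ f ∈ G, c • f ∈ G)
    (hsep : StronglySeparatesPoints G)
    (N : BoundedContinuousFunction U ℝ → ℝ)
    (hN0 : ∀ f ∈ G, 0 ≤ N f)
    (hNsmul : ∀ (c : ℝ), ∀ f ∈ G, N (c • f) = |c| * N f)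
    (hNadd : ∀ f ∈ G, ∀ g ∈ G, N (f + g) ≤ N f + N g)
    (μ : ℕ → Measure U) (ν : Measure U)
    (hμprob : ∀ n, IsProbabilityMeasure (μ n)) (hνprob : IsProbabilityMeasure ν)
    (htend : Tendsto (fun n => dG G N (μ n) ν) atTop (𝓝 0)) :
    ∀ f : BoundedContinuousFunction U ℝ,
      Tendsto (fun n => ∫ x, f x ∂(μ n)) atTop (𝓝 (∫ x, f x ∂ν)) := by
  classical
  haveI : ∀ n, IsProbabilityMeasure (μ n) := hμprob
  haveI : IsProbabilityMeasure ν := hνprob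
  -- degenerate case: empty space
  rcases isEmpty_or_nonempty U with hU | hU
  · intro f
    exfalso
    have h1 : ν Set.univ = 1 := measure_univ
    rw [Set.univ_eq_empty_iff.2 hU, measure_empty] at h1
    exact zero_ne_one h1
  -- degenerate case: subsingleton space
  rcases subsingleton_or_nontrivial U with hsub | hnt
  · intro f
    obtain ⟨u0⟩ := hU
    have hc : ∀ (m : Measure U), IsProbabilityMeasure m → ∫ x, f x ∂m = f u0 := by
      intro m hm
      have h1 : ∫ x, f x ∂m = ∫ _x, f u0 ∂m :=
        integral_congr_ae (Filter.Eventually.of_forall fun x => by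
          rw [Subsingleton.elim x u0])
      rw [h1, integral_const]
      simp
    have h2 : (fun n => ∫ x, f x ∂μ n) = fun _ => f u0 :=
      funext fun n => hc (μ n) (hμprob n)
    rw [h2, hc ν hνprob]
    exact tendsto_const_nhds
  -- main case: `U` is nontrivial
  letI := TopologicalSpace.upgradeIsCompletelyMetrizable U
  have h0G : (0 : U →ᵇ ℝ) ∈ G := by
    obtain ⟨u, v, huv⟩ := hnt
    obtain ⟨F, hFG, ε, εpos, hF⟩ := hsep u {v}ᶜ (compl_singleton_mem_nhds huv)
    obtain ⟨f0, hf0F, -⟩ := hF v (by simp)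
    have h := hsmul 0 f0 (hFG hf0F)
    simpa using h
  -- Step 1: integrals of elements of `G` converge
  have hG_D : ∀ g ∈ G, Tendsto (fun n => ∫ x, g x ∂μ n) atTop (𝓝 (∫ x, g x ∂ν)) := by
    intro g hg
    rcases eq_or_ne g 0 with rfl | hgne
    · have hz : ∀ (m : Measure U), ∫ x, (0 : U →ᵇ ℝ) x ∂m = 0 := fun m => by simp
      simp only [hz]
      exact tendsto_const_nhds
    · have hpos : 0 < ‖g‖ + N g :=
        add_pos_of_pos_of_nonneg (norm_pos_iff.2 hgne) (hN0 g hg)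
      have hb : ∀ n, |(∫ x, g x ∂μ n) - ∫ x, g x ∂ν| ≤ (‖g‖ + N g) * dG G N (μ n) ν := by
        intro n
        have hbdd : BddAbove {r : ℝ | ∃ f ∈ G, f ≠ 0 ∧
            r = |(∫ x, f x ∂μ n) - ∫ x, f x ∂ν| / (‖f‖ + N f)} := by
          refine ⟨2, ?_⟩
          rintro r ⟨f, hf, hfne, rfl⟩
          have hfpos : 0 < ‖f‖ + N f :=
            add_pos_of_pos_of_nonneg (norm_pos_iff.2 hfne) (hN0 f hf)
          rw [div_le_iff₀ hfpos]
          have h1 : |∫ x, f x ∂μ n| ≤ ‖f‖ := by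
            have h := f.norm_integral_le_norm (μ n)
            rwa [Real.norm_eq_abs] at h
          have h2 : |∫ x, f x ∂ν| ≤ ‖f‖ := by
            have h := f.norm_integral_le_norm ν
            rwa [Real.norm_eq_abs] at h
          have h3 := abs_sub (∫ x, f x ∂μ n) (∫ x, f x ∂ν)
          have h4 := hN0 f hf
          nlinarith [norm_nonneg f]
        have hmem : |(∫ x, g x ∂μ n) - ∫ x, g x ∂ν| / (‖g‖ + N g) ∈
            {r : ℝ | ∃ f ∈ G, f ≠ 0 ∧
              r = |(∫ x, f x ∂μ n) - ∫ x, f x ∂ν| / (‖f‖ + N f)} := ⟨g, hg, hgne, rfl⟩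
        have hle : |(∫ x, g x ∂μ n) - ∫ x, g x ∂ν| / (‖g‖ + N g) ≤ dG G N (μ n) ν :=
          le_csSup hbdd hmem
        rw [div_le_iff₀ hpos] at hle
        linarith [hle, mul_comm (dG G N (μ n) ν) (‖g‖ + N g)]
      have hlim : Tendsto (fun n => (‖g‖ + N g) * dG G N (μ n) ν) atTop (𝓝 0) := by
        simpa using htend.const_mul (‖g‖ + N g)
      have hsq := squeeze_zero (fun n => abs_nonneg _) hb hlim
      rw [tendsto_iff_dist_tendsto_zero]
      simpa [Real.dist_eq] using hsq
  -- The subalgebra `S = G + ℝ·1`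
  set S : Subalgebra ℝ (U →ᵇ ℝ) := mkS G hadd hmul hsmul h0G with hS_def
  have hGS : ∀ g ∈ G, g ∈ S := fun g hg => ⟨g, hg, 0, by ext u; simp⟩
  have hconstS : ∀ c : ℝ, const U c ∈ S := fun c => ⟨0, h0G, c, by ext u; simp⟩
  have hS_D : ∀ s ∈ (S : Set (U →ᵇ ℝ)),
      Tendsto (fun n => ∫ x, s x ∂μ n) atTop (𝓝 (∫ x, s x ∂ν)) := by
    rintro s ⟨g, hg, c, rfl⟩
    have hint : ∀ (m : Measure U), IsProbabilityMeasure m →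
        ∫ x, (g + const U c) x ∂m = (∫ x, g x ∂m) + c := by
      intro m hm
      rw [g.integral_add_const c]
      simp
    simp only [fun n => hint (μ n) (hμprob n), hint ν hνprob]
    exact (hG_D g hg).add_const c
  have hclos_D : ∀ f : U →ᵇ ℝ, f ∈ closure (S : Set (U →ᵇ ℝ)) →
      Tendsto (fun n => ∫ x, f x ∂μ n) atTop (𝓝 (∫ x, f x ∂ν)) := fun f hf =>
    tendsto_of_mem_closure μ ν (S : Set (U →ᵇ ℝ)) hS_D hf
  -- The key open-set liminf estimate
  have h_opens : ∀ O : Set U, IsOpen O → ν O ≤ atTop.liminf (fun n => μ n O) := by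
    intro O hO
    apply ENNReal.le_of_forall_pos_le_add
    intro ε' hε' hlim_top
    set ε3 : ℝ≥0∞ := (ε' : ℝ≥0∞) / 3 with hε3_def
    have hε3_ne : ε3 ≠ 0 := by
      simp only [hε3_def, ne_eq, ENNReal.div_eq_zero_iff]
      push_neg
      exact ⟨by exact_mod_cast hε'.ne', by norm_num⟩
    have hε3_netop : ε3 ≠ ∞ := by
      simp only [hε3_def]
      exact (ENNReal.div_lt_top ENNReal.coe_ne_top (by norm_num)).ne
    have hε3_sum : ε3 + ε3 + ε3 = (ε' : ℝ≥0∞) := ENNReal.add_thirds _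
    -- inner approximation of `O` by a closed set
    obtain ⟨C, hCO, hCcl, hCν⟩ : ∃ C : Set U, C ⊆ O ∧ IsClosed C ∧ ν O ≤ ν C + ε3 := by
      rcases le_or_gt (ν O) ε3 with h | h
      · exact ⟨∅, Set.empty_subset O, isClosed_empty, by simpa using h⟩
      · have hνO0 : ν O ≠ 0 := by
          intro h0
          rw [h0] at h
          exact (not_lt.2 (zero_le : 0 ≤ ε3)) h
        have hlt : ν O - ε3 < ν O :=
          ENNReal.sub_lt_self (measure_ne_top ν O) hνO0 hε3_ne
        obtain ⟨C, hCO, hCcl, hC⟩ := hO.exists_lt_isClosed hlt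
        exact ⟨C, hCO, hCcl, by
          rw [← tsub_le_iff_right]
          exact hC.le⟩
    -- tightness
    obtain ⟨Kt, hKt, hKtν⟩ := exists_compact_compl_le ν hε3_ne
    set K : Set U := C ∩ Kt with hK_def
    have hKcompact : IsCompact K := hKt.inter_left hCcl
    have hKO : K ⊆ O := Set.inter_subset_left.trans hCO
    have hKmeas : MeasurableSet K :=
      hCcl.measurableSet.inter hKt.isClosed.measurableSet
    have hCK : ν C ≤ ν K + ε3 := by
      calc ν C ≤ ν (K ∪ Ktᶜ) := measure_mono fun x hx => by
            by_cases hxK : x ∈ Kt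
            · exact Or.inl ⟨hx, hxK⟩
            · exact Or.inr hxK
        _ ≤ ν K + ν Ktᶜ := measure_union_le _ _
        _ ≤ ν K + ε3 := add_le_add_right hKtν _
    rcases Set.eq_empty_or_nonempty K with hKemp | hKne
    · rw [hKemp, measure_empty, zero_add] at hCK
      calc ν O ≤ ν C + ε3 := hCν
        _ ≤ ε3 + ε3 := add_le_add_left hCK _
        _ ≤ (ε' : ℝ≥0∞) := by
            rw [← hε3_sum]
            exact le_self_add
        _ ≤ atTop.liminf (fun n => μ n O) + ε' := self_le_add_left _ _
    -- `K` is nonempty; fit a thickening inside `O`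
    obtain ⟨δ, δpos, hδO⟩ := hKcompact.exists_thickening_subset_open hO hKO
    set τ : ℝ := ε3.toReal with hτ_def
    have hτpos : 0 < τ := ENNReal.toReal_pos hε3_ne hε3_netop
    -- per-point functions from strong separation
    have hpoint : ∀ x : U, ∃ h : U →ᵇ ℝ, h ∈ S ∧ (∀ u, 0 ≤ h u) ∧ h x = 0 ∧
        ∀ u, u ∉ Metric.ball x δ → 1 ≤ h u := by
      intro x
      obtain ⟨F, hFG, ε, εpos, hF⟩ := hsep x (Metric.ball x δ) (Metric.ball_mem_nhds x δpos)
      set g : U →ᵇ ℝ := ∑ f ∈ F, (f - const U (f x)) ^ 2 with hg_def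
      have hgval : ∀ u, g u = ∑ f ∈ F, (f u - f x) ^ 2 := by
        intro u
        rw [hg_def, coe_sum, Finset.sum_apply]
        refine Finset.sum_congr rfl fun f _ => ?_
        rw [coe_pow]
        simp
      have hgS : g ∈ S := by
        apply Subalgebra.sum_mem
        intro f hf
        exact pow_mem (sub_mem (hGS f (hFG hf)) (hconstS (f x))) 2
      have hg0 : ∀ u, 0 ≤ g u := fun u => by
        rw [hgval]
        exact Finset.sum_nonneg fun f _ => sq_nonneg _
      have hgx : g x = 0 := by
        rw [hgval]
        simp
      have hglb : ∀ u, u ∉ Metric.ball x δ → ε ^ 2 ≤ g u := by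
        intro u hu
        obtain ⟨f, hfF, hfabs⟩ := hF u hu
        have h1 : ε ^ 2 ≤ (f u - f x) ^ 2 := by
          have := pow_le_pow_left₀ εpos.le hfabs 2
          rwa [sq_abs] at this
        calc ε ^ 2 ≤ (f u - f x) ^ 2 := h1
          _ ≤ ∑ f ∈ F, (f u - f x) ^ 2 :=
            Finset.single_le_sum (fun f _ => sq_nonneg ((f : U →ᵇ ℝ) u - f x)) hfF
          _ = g u := (hgval u).symm
      refine ⟨(ε ^ 2)⁻¹ • g, S.smul_mem hgS _, ?_, ?_, ?_⟩
      · intro u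
        have : ((ε ^ 2)⁻¹ • g) u = (ε ^ 2)⁻¹ * g u := rfl
        rw [this]
        exact mul_nonneg (inv_nonneg.2 (sq_nonneg ε)) (hg0 u)
      · have : ((ε ^ 2)⁻¹ • g) x = (ε ^ 2)⁻¹ * g x := rfl
        rw [this, hgx, mul_zero]
      · intro u hu
        have h1 : ((ε ^ 2)⁻¹ • g) u = (ε ^ 2)⁻¹ * g u := rfl
        rw [h1]
        have h2 : (ε ^ 2)⁻¹ * ε ^ 2 ≤ (ε ^ 2)⁻¹ * g u :=
          mul_le_mul_of_nonneg_left (hglb u hu) (inv_nonneg.2 (sq_nonneg ε))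
        rwa [inv_mul_cancel₀ (pow_ne_zero 2 εpos.ne')] at h2
    choose hh hhS hh0 hhx hh1 using hpoint
    -- continuity radii
    have hrad : ∀ x : U, ∃ r : ℝ, 0 < r ∧ ∀ u ∈ Metric.ball x r, hh x u < τ := by
      intro x
      have hopen : IsOpen {u : U | hh x u < τ} :=
        isOpen_lt (hh x).continuous continuous_const
      have hx : x ∈ {u : U | hh x u < τ} := by
        simp only [Set.mem_setOf_eq, hhx x]
        exact hτpos
      obtain ⟨r, hr, hball⟩ := Metric.mem_nhds_iff.1 (hopen.mem_nhds hx)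
      exact ⟨r, hr, fun u hu => hball hu⟩
    choose rr hrpos hrball using hrad
    obtain ⟨t, htK, htcover⟩ := hKcompact.elim_nhds_subcover (fun x => Metric.ball x (rr x))
      (fun x _ => Metric.ball_mem_nhds x (hrpos x))
    have htne : t.Nonempty := by
      obtain ⟨x0, hx0⟩ := hKne
      obtain ⟨i, hi, -⟩ := Set.mem_iUnion₂.1 (htcover hx0)
      exact ⟨i, hi⟩
    -- the test function `W`
    obtain ⟨W, hWmem, hWval⟩ := finInf_mem S (fun x => minB (hh x) 1) t htne
      (fun x _ => minB_mem_closure S (subset_closure (hhS x)) (subset_closure S.one_mem))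
    have hq : ∀ (x : U) (u : U), minB (hh x) 1 u = min (hh x u) 1 := by
      intro x u
      rw [minB_apply]
      rfl
    have hW0 : ∀ u, 0 ≤ W u := by
      intro u
      rw [hWval]
      exact Finset.le_inf' htne _ fun i _ => by
        rw [hq]
        exact le_min (hh0 i u) zero_le_one
    have hW1 : ∀ u, W u ≤ 1 := by
      intro u
      obtain ⟨i, hi⟩ := htne
      rw [hWval]
      exact (Finset.inf'_le _ hi).trans (by rw [hq]; exact min_le_right _ _)
    have hWout : ∀ u, u ∉ O → 1 ≤ W u := by
      intro u hu
      have hu' : u ∉ Metric.thickening δ K := fun h => hu (hδO h)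
      rw [hWval]
      apply Finset.le_inf' htne
      intro x hx
      have hub : u ∉ Metric.ball x δ := fun hb =>
        hu' (Metric.ball_subset_thickening (htK x hx) δ hb)
      rw [hq]
      exact le_min (hh1 x u hub) le_rfl
    have hWK : ∀ u ∈ K, W u ≤ τ := by
      intro u hu
      obtain ⟨x, hxt, hu'⟩ := Set.mem_iUnion₂.1 (htcover hu)
      rw [hWval]
      calc (t.inf' htne fun i => minB (hh i) 1 u) ≤ minB (hh x) 1 u :=
            Finset.inf'_le _ hxt
        _ ≤ hh x u := by rw [hq]; exact min_le_left _ _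
        _ ≤ τ := (hrball x u hu').le
    -- integrals of `W`
    have hWD : Tendsto (fun n => ∫ x, W x ∂μ n) atTop (𝓝 (∫ x, W x ∂ν)) :=
      hclos_D W hWmem
    set In : ℕ → ℝ := fun n => ∫ x, W x ∂μ n with hIn_def
    set I : ℝ := ∫ x, W x ∂ν with hI_def
    -- lower bound on `μ n O`
    have hA : ∀ n, ENNReal.ofReal (1 - In n) ≤ μ n O := by
      intro n
      apply ENNReal.ofReal_le_of_le_toReal
      have h1 : (1 : ℝ) - In n = ∫ x, (1 - W x) ∂μ n := by
        rw [integral_sub (integrable_const 1) (W.integrable (μ n)), integral_const]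
        simp
        rfl
      rw [h1]
      have h2 : ∫ x, (1 - W x) ∂μ n ≤ ∫ x, O.indicator (fun _ => (1 : ℝ)) x ∂μ n := by
        apply integral_mono ((integrable_const 1).sub (W.integrable (μ n)))
          ((integrable_const 1).indicator hO.measurableSet)
        intro x
        simp only [Pi.sub_apply]
        by_cases hx : x ∈ O
        · simp only [Set.indicator_of_mem hx]
          linarith [hW0 x]
        · simp only [Set.indicator_of_notMem hx]
          linarith [hWout x hx]
      rw [integral_indicator_const (1 : ℝ) hO.measurableSet] at h2
      exact (by simpa using h2 : _ ≤ (μ n).real O)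
    have hliminf1 : ENNReal.ofReal (1 - I) ≤ atTop.liminf (fun n => μ n O) := by
      have h2 : Tendsto (fun n => ENNReal.ofReal (1 - In n)) atTop
          (𝓝 (ENNReal.ofReal (1 - I))) :=
        (ENNReal.continuous_ofReal.tendsto _).comp (tendsto_const_nhds.sub hWD)
      calc ENNReal.ofReal (1 - I) = atTop.liminf (fun n => ENNReal.ofReal (1 - In n)) :=
            h2.liminf_eq.symm
        _ ≤ atTop.liminf (fun n => μ n O) := liminf_le_liminf (Eventually.of_forall hA)
    -- upper bound on `I`
    have hI_le : I ≤ τ * (ν K).toReal + (ν Kᶜ).toReal := by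
      have hsplit : I = (∫ x in K, W x ∂ν) + ∫ x in Kᶜ, W x ∂ν :=
        (integral_add_compl hKmeas (W.integrable ν)).symm
      have hK1 : ∫ x in K, W x ∂ν ≤ ∫ x in K, τ ∂ν :=
        setIntegral_mono_on (W.integrable ν).integrableOn (integrableOn_const
          (measure_ne_top ν K)) hKmeas (fun x hx => hWK x hx)
      have hK2 : ∫ x in Kᶜ, W x ∂ν ≤ ∫ x in Kᶜ, (1 : ℝ) ∂ν :=
        setIntegral_mono_on (W.integrable ν).integrableOn (integrableOn_const
          (measure_ne_top ν Kᶜ)) hKmeas.compl (fun x _ => hW1 x)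
      rw [setIntegral_const] at hK1 hK2
      rw [hsplit]
      have e1 : ν.real K • τ = τ * (ν K).toReal :=
        (smul_eq_mul _ _).trans (mul_comm _ _)
      have e2 : ν.real Kᶜ • (1 : ℝ) = (ν Kᶜ).toReal := (smul_eq_mul _ _).trans (mul_one _)
      rw [e1] at hK1
      rw [e2] at hK2
      linarith
    have hcompl_real : (ν K).toReal + (ν Kᶜ).toReal = 1 := by
      have h := measure_add_measure_compl (μ := ν) hKmeas
      rw [measure_univ] at h
      have h2 := congrArg ENNReal.toReal h
      rwa [ENNReal.toReal_add (measure_ne_top ν K) (measure_ne_top ν Kᶜ),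
        ENNReal.toReal_one] at h2
    have hKT : (ν K).toReal ≤ (1 - I) + τ := by
      have hKle1 : (ν K).toReal ≤ 1 := by
        have := ENNReal.toReal_nonneg (a := ν Kᶜ)
        linarith
      have hτK : τ * (ν K).toReal ≤ τ := by
        calc τ * (ν K).toReal ≤ τ * 1 := mul_le_mul_of_nonneg_left hKle1 hτpos.le
          _ = τ := mul_one τ
      linarith
    have hKofReal : ν K ≤ ENNReal.ofReal (1 - I) + ε3 := by
      have h0 : ν K = ENNReal.ofReal ((ν K).toReal) :=
        (ENNReal.ofReal_toReal (measure_ne_top ν K)).symm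
      rw [h0]
      calc ENNReal.ofReal ((ν K).toReal) ≤ ENNReal.ofReal ((1 - I) + τ) :=
            ENNReal.ofReal_le_ofReal hKT
        _ ≤ ENNReal.ofReal (1 - I) + ENNReal.ofReal τ := ENNReal.ofReal_add_le
        _ = ENNReal.ofReal (1 - I) + ε3 := by
            rw [hτ_def, ENNReal.ofReal_toReal hε3_netop]
    have step1 : ν O ≤ ENNReal.ofReal (1 - I) + (ε3 + ε3 + ε3) := by
      calc ν O ≤ ν C + ε3 := hCν
        _ ≤ (ν K + ε3) + ε3 := by gcongr
        _ ≤ ((ENNReal.ofReal (1 - I) + ε3) + ε3) + ε3 := by gcongr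
        _ = ENNReal.ofReal (1 - I) + (ε3 + ε3 + ε3) := by
            rw [add_assoc, add_assoc, ← add_assoc ε3 ε3 ε3]
    rw [hε3_sum] at step1
    exact step1.trans (add_le_add_left hliminf1 _)
  -- conclude by the portmanteau machinery
  intro f
  apply tendsto_integral_of_forall_integral_le_liminf_integral
  intro f' hf'
  exact integral_le_liminf_integral_of_forall_isOpen_measure_le_liminf_measure hf' h_opens
end

section
/- Let U and A be Polish spaces, let ν₀ be a Borel probability measure on U, and let t ↦ μ_t be a measurable map from [0,∞) to the Borel probability measures on U × A (with the weak topology), writing μ_t^U and μ_t^A for the marginals. Let ψ_U : U → [0,∞) and ψ_A : A → [0,∞) be continuous, let Λ₁, L_U, L_A, Λ_A > 0, let (φ_n)_{n∈ℕ} ⊆ C_b(U) be nonnegative, pointwise nondecreasing in n and converging pointwise to ψ_U, and let (g_n)_{n∈ℕ} be continuous functions on U × A × [0,∞) with |g_n(u,a,t)| ≤ Λ₁(1 + ψ_U(u) + ψ_A(a)) for all n, u, a, t. Assume: (a) ∫ ψ_U dν₀ ≤ L_U; (b) ∫_A ψ_A(a) μ_t^A(da) ≤ L_A e^{Λ_A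 t} for all t ≥ 0; (c) the function t ↦ ∫ ψ_U dμ_t^U is finite, measurable, and bounded on bounded intervals; and (d) for all n and all t ≥ 0, ∫ φ_n dμ_t^U − ∫ φ_n dν₀ = ∫₀^t ∫_{U×A} g_n(u,a,s) μ_s(du × da) ds. Then for all t ≥ 0: ∫ ψ_U dμ_t^U ≤ ( L_U + Λ₁ t + (Λ₁ L_A / Λ_A)(e^{Λ_A t} − 1) ) e^{Λ₁ t}. -/
open MeasureTheory Filter Finset
open scoped Topology ENNReal

lemma poly_int {K : ℝ} (hK : 0 ≤ K) (k : ℕ) {s : ℝ} (hs : 0 ≤ s) :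
    K * ∫ r in Set.Ioc (0:ℝ) s, (K*r)^k / k.factorial
      = (K*s)^(k+1) / (k+1).factorial := by
  rw [← intervalIntegral.integral_of_le hs]
  have : ∀ r : ℝ, (K*r)^k / k.factorial = (K^k / k.factorial) * r^k := by
    intro r; rw [mul_pow]; ring
  simp_rw [this]
  rw [intervalIntegral.integral_const_mul, integral_pow]
  rw [Nat.factorial_succ, mul_pow]
  push_cast
  field_simp
  ring

lemma gronwall_iter {f : ℝ → ℝ} {t K B C : ℝ}
    (ht : 0 ≤ t) (hK : 0 ≤ K) (hB : 0 ≤ B) (hC : 0 ≤ C)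
    (hfi : MeasureTheory.IntegrableOn f (Set.Ioc 0 t))
    (hfC : ∀ s ∈ Set.Icc (0:ℝ) t, f s ≤ C)
    (hineq : ∀ s ∈ Set.Icc (0:ℝ) t, f s ≤ B + K * ∫ r in Set.Ioc (0:ℝ) s, f r) :
    f t ≤ B * Real.exp (K * t) := by
  have key : ∀ n : ℕ, ∀ s ∈ Set.Icc (0:ℝ) t,
      f s ≤ B * (∑ k ∈ range n, (K*s)^k / k.factorial) + C * ((K*s)^n / n.factorial) := by
    intro n
    induction n with
    | zero => intro s hs; simpa using hfC s hs
    | succ n ih =>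
      intro s hs
      obtain ⟨hs0, hst⟩ := hs
      have hIoc : Set.Ioc (0:ℝ) s ⊆ Set.Icc (0:ℝ) t :=
        fun r hr => ⟨le_of_lt hr.1, hr.2.trans hst⟩
      -- integral monotonicity
      set P : ℝ → ℝ := fun r => B * (∑ k ∈ range n, (K*r)^k / k.factorial)
          + C * ((K*r)^n / n.factorial) with hP
      have hPc : Continuous P := by fun_prop
      have hPi : MeasureTheory.IntegrableOn P (Set.Ioc 0 s) :=
        hPc.integrableOn_Ioc
      have hfi' : MeasureTheory.IntegrableOn f (Set.Ioc 0 s) :=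
        hfi.mono_set (Set.Ioc_subset_Ioc_right hst)
      have hmono : (∫ r in Set.Ioc (0:ℝ) s, f r) ≤ ∫ r in Set.Ioc (0:ℝ) s, P r := by
        apply setIntegral_mono_on hfi' hPi measurableSet_Ioc
        intro r hr
        exact ih r (hIoc hr)
      have h1 := hineq s ⟨hs0, hst⟩
      have h2 : f s ≤ B + K * ∫ r in Set.Ioc (0:ℝ) s, P r :=
        h1.trans (by gcongr)
      -- compute the integral
      have hint : K * ∫ r in Set.Ioc (0:ℝ) s, P r
          = B * (∑ k ∈ range n, (K*s)^(k+1) / (k+1).factorial)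
            + C * ((K*s)^(n+1) / (n+1).factorial) := by
        rw [hP]
        rw [MeasureTheory.integral_add ((by fun_prop : Continuous fun r => B * (∑ k ∈ range n, (K*r)^k / k.factorial)).integrableOn_Ioc) ((by fun_prop : Continuous fun r => C * ((K*r)^n / n.factorial)).integrableOn_Ioc)]
        rw [MeasureTheory.integral_const_mul, MeasureTheory.integral_const_mul]
        rw [integral_finset_sum _ (fun k _ => (by fun_prop : Continuous fun r => (K*r)^k / k.factorial).integrableOn_Ioc)]
        rw [mul_add, ← mul_assoc K B, mul_comm K B, mul_assoc B K, ← mul_assoc K C,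
          mul_comm K C, mul_assoc C K]
        congr 1
        · congr 1
          rw [Finset.mul_sum]
          exact Finset.sum_congr rfl fun k _ => poly_int hK k hs0
        · congr 1
          exact poly_int hK n hs0
      rw [hint] at h2
      calc f s ≤ B + (B * (∑ k ∈ range n, (K*s)^(k+1) / (k+1).factorial)
            + C * ((K*s)^(n+1) / (n+1).factorial)) := h2
        _ = B * (∑ k ∈ range (n+1), (K*s)^k / k.factorial)
              + C * ((K*s)^(n+1) / (n+1).factorial) := by
            rw [Finset.sum_range_succ']
            simp [mul_add]
            ring
  -- take limits
  have htt : t ∈ Set.Icc (0:ℝ) t := ⟨ht, le_refl t⟩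
  have hlim1 : Tendsto (fun n => ∑ k ∈ range n, (K*t)^k / (k.factorial : ℝ)) atTop
      (𝓝 (Real.exp (K*t))) := by
    rw [Real.exp_eq_exp_ℝ]
    exact (NormedSpace.expSeries_div_hasSum_exp (K*t)).tendsto_sum_nat
  have hlim2 : Tendsto (fun n => (K*t)^n / (n.factorial : ℝ)) atTop (𝓝 0) :=
    (Real.summable_pow_div_factorial (K*t)).tendsto_atTop_zero
  have hlim : Tendsto (fun n => B * (∑ k ∈ range n, (K*t)^k / (k.factorial : ℝ))
      + C * ((K*t)^n / (n.factorial : ℝ))) atTop (𝓝 (B * Real.exp (K*t) + C * 0)) :=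
    (hlim1.const_mul B).add (hlim2.const_mul C)
  rw [mul_zero, add_zero] at hlim
  exact ge_of_tendsto' hlim (fun n => key n t htt)

/-- The quantitative Grönwall bound for solutions of the Kolmogorov forward
equation of a regular controlled martingale problem: under the growth bounds on `Aφ_n` (here the
functions `g n`), on the initial distribution and on the action marginal, the `ψ_U`-moment of the
state marginal satisfies
`∫ ψ_U dμ_t^U ≤ (L_U + Λ₁ t + (Λ₁ L_A / Λ_A)(e^{Λ_A t} − 1)) e^{Λ₁ t}` for all `t ≥ 0`. -/
theorem statement12
    {U A : Type*} [TopologicalSpace U] [PolishSpace U] [MeasurableSpace U] [BorelSpace U]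
    [TopologicalSpace A] [PolishSpace A] [MeasurableSpace A] [BorelSpace A]
    (ν₀ : Measure U) [IsProbabilityMeasure ν₀]
    (μ : ℝ → Measure (U × A)) (hμprob : ∀ t, IsProbabilityMeasure (μ t))
    (hμmeas : ∀ g : BoundedContinuousFunction (U × A) ℝ,
      Measurable fun t => ∫ x, g x ∂(μ t))
    (ψU : U → ℝ) (ψA : A → ℝ) (hψUc : Continuous ψU) (hψAc : Continuous ψA)
    (hψU0 : ∀ u, 0 ≤ ψU u) (hψA0 : ∀ a, 0 ≤ ψA a)
    (Λ₁ LU LA ΛA : ℝ) (hΛ₁ : 0 < Λ₁) (hLU : 0 < LU) (hLA : 0 < LA) (hΛA : 0 < ΛA)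
    (φ : ℕ → BoundedContinuousFunction U ℝ)
    (hφ0 : ∀ n u, 0 ≤ φ n u)
    (hφmono : ∀ u, Monotone fun n => φ n u)
    (hφlim : ∀ u, Tendsto (fun n => φ n u) atTop (𝓝 (ψU u)))
    (g : ℕ → U × A × ℝ → ℝ) (hgcont : ∀ n, Continuous (g n))
    (hgbound : ∀ n u a t, 0 ≤ t → |g n (u, a, t)| ≤ Λ₁ * (1 + ψU u + ψA a))
    (ha : (∫⁻ u, ENNReal.ofReal (ψU u) ∂ν₀) ≤ ENNReal.ofReal LU)
    (hb : ∀ t : ℝ, 0 ≤ t →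
      (∫⁻ a, ENNReal.ofReal (ψA a) ∂((μ t).map Prod.snd))
        ≤ ENNReal.ofReal (LA * Real.exp (ΛA * t)))
    (hc_fin : ∀ t : ℝ, 0 ≤ t →
      (∫⁻ u, ENNReal.ofReal (ψU u) ∂((μ t).map Prod.fst)) < ⊤)
    (hc_meas : Measurable fun t => ∫⁻ u, ENNReal.ofReal (ψU u) ∂((μ t).map Prod.fst))
    (hc_bdd : ∀ T : ℝ, 0 ≤ T → ∃ C : ℝ≥0∞, C < ⊤ ∧ ∀ t ∈ Set.Icc (0:ℝ) T,
      (∫⁻ u, ENNReal.ofReal (ψU u) ∂((μ t).map Prod.fst)) ≤ C)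
    (hd : ∀ (n : ℕ) (t : ℝ), 0 ≤ t →
      (∫ u, φ n u ∂((μ t).map Prod.fst)) - (∫ u, φ n u ∂ν₀)
        = ∫ s in Set.Ioc (0:ℝ) t, ∫ x : U × A, g n (x.1, x.2, s) ∂(μ s)) :
    ∀ t : ℝ, 0 ≤ t →
      (∫⁻ u, ENNReal.ofReal (ψU u) ∂((μ t).map Prod.fst))
        ≤ ENNReal.ofReal
            ((LU + Λ₁ * t + (Λ₁ * LA / ΛA) * (Real.exp (ΛA * t) - 1)) * Real.exp (Λ₁ * t)) := by
  -- the ψU-moment function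
  set F : ℝ → ℝ≥0∞ := fun s => ∫⁻ u, ENNReal.ofReal (ψU u) ∂((μ s).map Prod.fst) with hF
  set f : ℝ → ℝ := fun s => (F s).toReal with hf
  have hfm : Measurable f := hc_meas.ennreal_toReal
  have hf0 : ∀ s, 0 ≤ f s := fun s => ENNReal.toReal_nonneg
  -- integrability of ψU w.r.t. the state marginal
  have hψUint : ∀ s, 0 ≤ s → Integrable ψU ((μ s).map Prod.fst) := by
    intro s hs
    refine ⟨hψUc.aestronglyMeasurable, ?_⟩
    rw [hasFiniteIntegral_iff_ofReal (Eventually.of_forall hψU0)]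
    exact hc_fin s hs
  have hψUeq : ∀ s, 0 ≤ s → ∫ u, ψU u ∂((μ s).map Prod.fst) = f s := by
    intro s hs
    rw [integral_eq_lintegral_of_nonneg_ae (Eventually.of_forall hψU0)
      hψUc.aestronglyMeasurable]
  -- integrability of ψA w.r.t. the action marginal, with exponential bound
  have hψAint : ∀ s, 0 ≤ s → Integrable ψA ((μ s).map Prod.snd) := by
    intro s hs
    refine ⟨hψAc.aestronglyMeasurable, ?_⟩
    rw [hasFiniteIntegral_iff_ofReal (Eventually.of_forall hψA0)]
    exact lt_of_le_of_lt (hb s hs) ENNReal.ofReal_lt_top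
  have hψAle : ∀ s, 0 ≤ s → ∫ a, ψA a ∂((μ s).map Prod.snd) ≤ LA * Real.exp (ΛA * s) := by
    intro s hs
    rw [integral_eq_lintegral_of_nonneg_ae (Eventually.of_forall hψA0)
      hψAc.aestronglyMeasurable]
    exact ENNReal.toReal_le_of_le_ofReal (by positivity) (hb s hs)
  -- compositions integrable w.r.t. μ s
  have hcompU : ∀ s, 0 ≤ s → Integrable (fun x : U × A => ψU x.1) (μ s) := fun s hs =>
    (integrable_map_measure hψUc.aestronglyMeasurable measurable_fst.aemeasurable).mp
      (hψUint s hs)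
  have hcompA : ∀ s, 0 ≤ s → Integrable (fun x : U × A => ψA x.2) (μ s) := fun s hs =>
    (integrable_map_measure hψAc.aestronglyMeasurable measurable_snd.aemeasurable).mp
      (hψAint s hs)
  have hDint : ∀ s, 0 ≤ s →
      Integrable (fun x : U × A => Λ₁ * (1 + ψU x.1 + ψA x.2)) (μ s) := by
    intro s hs
    haveI := hμprob s
    exact (((integrable_const 1).add (hcompU s hs)).add (hcompA s hs)).const_mul Λ₁
  have hDeq : ∀ s, 0 ≤ s → ∫ x : U × A, Λ₁ * (1 + ψU x.1 + ψA x.2) ∂(μ s)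
      = Λ₁ * (1 + f s + ∫ a, ψA a ∂((μ s).map Prod.snd)) := by
    intro s hs
    haveI := hμprob s
    have hI1 : Integrable (fun x : U × A => (1:ℝ) + ψU x.1) (μ s) :=
      (integrable_const 1).add (hcompU s hs)
    rw [MeasureTheory.integral_const_mul]
    congr 1
    rw [integral_add hI1 (hcompA s hs),
      integral_add (integrable_const (1:ℝ)) (hcompU s hs), integral_const]
    have h1 : ∫ x : U × A, ψU x.1 ∂(μ s) = f s := by
      rw [← integral_map measurable_fst.aemeasurable hψUc.aestronglyMeasurable]
      exact hψUeq s hs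
    have h2 : ∫ x : U × A, ψA x.2 ∂(μ s) = ∫ a, ψA a ∂((μ s).map Prod.snd) := by
      rw [← integral_map measurable_snd.aemeasurable hψAc.aestronglyMeasurable]
    rw [h1, h2]
    simp
  -- the pointwise bound on the time integrand
  have hHbound : ∀ (n : ℕ) (s : ℝ), 0 ≤ s →
      ‖∫ x : U × A, g n (x.1, x.2, s) ∂(μ s)‖
        ≤ Λ₁ * (1 + f s + LA * Real.exp (ΛA * s)) := by
    intro n s hs
    calc ‖∫ x : U × A, g n (x.1, x.2, s) ∂(μ s)‖
        ≤ ∫ x : U × A, ‖g n (x.1, x.2, s)‖ ∂(μ s) := norm_integral_le_integral_norm _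
      _ ≤ ∫ x : U × A, Λ₁ * (1 + ψU x.1 + ψA x.2) ∂(μ s) := by
          refine integral_mono_of_nonneg (Eventually.of_forall fun x => norm_nonneg _)
            (hDint s hs) (Eventually.of_forall fun x => ?_)
          simpa [Real.norm_eq_abs] using hgbound n x.1 x.2 s hs
      _ = Λ₁ * (1 + f s + ∫ a, ψA a ∂((μ s).map Prod.snd)) := hDeq s hs
      _ ≤ Λ₁ * (1 + f s + LA * Real.exp (ΛA * s)) := by
          have := hψAle s hs
          nlinarith [hf0 s]
  -- local integrability of f
  have hfint : ∀ T, 0 ≤ T → IntegrableOn f (Set.Ioc 0 T) := by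
    intro T hT
    obtain ⟨C, hCfin, hC⟩ := hc_bdd T hT
    refine Measure.integrableOn_of_bounded (M := C.toReal)
      (by simp : volume (Set.Ioc (0:ℝ) T) ≠ ⊤) hfm.aestronglyMeasurable ?_
    refine (ae_restrict_iff' measurableSet_Ioc).mpr (Eventually.of_forall fun s hs => ?_)
    rw [Real.norm_eq_abs, abs_of_nonneg (hf0 s)]
    exact ENNReal.toReal_mono hCfin.ne (hC s ⟨hs.1.le, hs.2⟩)
  -- φ n ≤ ψU pointwise, so ∫ φ n dν₀ ≤ LU
  have hφle : ∀ n u, φ n u ≤ ψU u := fun n u => (hφmono u).ge_of_tendsto (hφlim u) n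
  have hφν : ∀ n : ℕ, ∫ u, φ n u ∂ν₀ ≤ LU := by
    intro n
    rw [integral_eq_lintegral_of_nonneg_ae (Eventually.of_forall (hφ0 n))
      (φ n).continuous.aestronglyMeasurable]
    refine ENNReal.toReal_le_of_le_ofReal hLU.le (le_trans ?_ ha)
    exact lintegral_mono fun u => ENNReal.ofReal_le_ofReal (hφle n u)
  -- the key integral inequality
  have hkey : ∀ t, 0 ≤ t →
      f t ≤ (LU + Λ₁ * t + (Λ₁ * LA / ΛA) * (Real.exp (ΛA * t) - 1))
        + Λ₁ * ∫ s in Set.Ioc (0:ℝ) t, f s := by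
    intro t ht
    set Dt : ℝ → ℝ := fun s => Λ₁ * (1 + f s + LA * Real.exp (ΛA * s)) with hDt
    have hI0 : IntegrableOn (fun _ : ℝ => (1:ℝ)) (Set.Ioc 0 t) :=
      (integrableOn_const_iff).mpr (Or.inr (by simp))
    have hIexp : IntegrableOn (fun s : ℝ => LA * Real.exp (ΛA * s)) (Set.Ioc 0 t) := by
      have : Continuous fun s : ℝ => LA * Real.exp (ΛA * s) := by fun_prop
      exact this.integrableOn_Ioc
    have hI1 : IntegrableOn (fun s : ℝ => (1:ℝ) + f s) (Set.Ioc 0 t) :=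
      hI0.add (hfint t ht)
    have hI2 : IntegrableOn (fun s : ℝ => (1:ℝ) + f s + LA * Real.exp (ΛA * s))
        (Set.Ioc 0 t) := hI1.add hIexp
    have hDtint : IntegrableOn Dt (Set.Ioc 0 t) := hI2.const_mul Λ₁
    have hDtnn : ∀ s, 0 ≤ s → 0 ≤ Dt s := by
      intro s hs
      have := hf0 s
      positivity
    -- each φ n satisfies the bound
    have hstep : ∀ n : ℕ, ∫ u, φ n u ∂((μ t).map Prod.fst)
        ≤ LU + ∫ s in Set.Ioc (0:ℝ) t, Dt s := by
      intro n
      have hdn := hd n t ht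
      have hHle : (∫ s in Set.Ioc (0:ℝ) t, ∫ x : U × A, g n (x.1, x.2, s) ∂(μ s))
          ≤ ∫ s in Set.Ioc (0:ℝ) t, Dt s := by
        have habs : (∫ s in Set.Ioc (0:ℝ) t, ∫ x : U × A, g n (x.1, x.2, s) ∂(μ s))
            ≤ ‖∫ s in Set.Ioc (0:ℝ) t, ∫ x : U × A, g n (x.1, x.2, s) ∂(μ s)‖ :=
          (le_abs_self _).trans_eq (Real.norm_eq_abs _).symm
        refine habs.trans (le_trans (norm_integral_le_integral_norm _) ?_)
        refine integral_mono_of_nonneg (Eventually.of_forall fun s => norm_nonneg _) hDtint ?_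
        refine (ae_restrict_iff' measurableSet_Ioc).mpr
          (Eventually.of_forall fun s hs => ?_)
        exact hHbound n s hs.1.le
      have := hφν n
      linarith [hdn ▸ hHle]
    -- pass to the limit in n
    have hFle : F t ≤ ENNReal.ofReal (LU + ∫ s in Set.Ioc (0:ℝ) t, Dt s) := by
      have hmc : F t = ⨆ n, ∫⁻ u, ENNReal.ofReal (φ n u) ∂((μ t).map Prod.fst) := by
        rw [← lintegral_iSup (fun n => ((φ n).continuous.measurable).ennreal_ofReal)
          (fun i j hij u => ENNReal.ofReal_le_ofReal (hφmono u hij))]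
        exact lintegral_congr fun u =>
          (iSup_eq_of_tendsto
            (fun i j hij => ENNReal.ofReal_le_ofReal (hφmono u hij))
            ((ENNReal.continuous_ofReal.tendsto _).comp (hφlim u))).symm
      rw [hmc]
      refine iSup_le fun n => ?_
      haveI := hμprob t
      haveI : IsProbabilityMeasure ((μ t).map Prod.fst) :=
        Measure.isProbabilityMeasure_map measurable_fst.aemeasurable
      rw [← ofReal_integral_eq_lintegral_ofReal ((φ n).integrable _)
        (Eventually.of_forall (hφ0 n))]
      exact ENNReal.ofReal_le_ofReal (hstep n)
    have hDtnn' : 0 ≤ ∫ s in Set.Ioc (0:ℝ) t, Dt s := by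
      refine setIntegral_nonneg measurableSet_Ioc fun s hs => hDtnn s hs.1.le
    have hft : f t ≤ LU + ∫ s in Set.Ioc (0:ℝ) t, Dt s :=
      ENNReal.toReal_le_of_le_ofReal (by linarith) hFle
    -- compute the integral of Dt
    have hexp : ∫ s in Set.Ioc (0:ℝ) t, Real.exp (ΛA * s)
        = (Real.exp (ΛA * t) - 1) / ΛA := by
      rw [← intervalIntegral.integral_of_le ht,
        intervalIntegral.integral_comp_mul_left (fun x => Real.exp x) hΛA.ne']
      rw [integral_exp]
      simp [smul_eq_mul]
      ring
    have hone : ∫ s in Set.Ioc (0:ℝ) t, (1:ℝ) = t := by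
      simp [Real.volume_Ioc, ENNReal.toReal_ofReal ht, ht]
    have hDtcalc : ∫ s in Set.Ioc (0:ℝ) t, Dt s
        = Λ₁ * t + Λ₁ * (∫ s in Set.Ioc (0:ℝ) t, f s)
          + Λ₁ * LA * ((Real.exp (ΛA * t) - 1) / ΛA) := by
      rw [hDt]
      rw [MeasureTheory.integral_const_mul]
      rw [integral_add hI1 hIexp, integral_add hI0 (hfint t ht)]
      rw [MeasureTheory.integral_const_mul, hexp, hone]
      ring
    rw [hDtcalc] at hft
    have : (Λ₁ * LA / ΛA) * (Real.exp (ΛA * t) - 1)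
        = Λ₁ * LA * ((Real.exp (ΛA * t) - 1) / ΛA) := by ring
    linarith [hft]
  -- apply Grönwall
  intro t ht
  obtain ⟨C, hCfin, hC⟩ := hc_bdd t ht
  set B := LU + Λ₁ * t + (Λ₁ * LA / ΛA) * (Real.exp (ΛA * t) - 1) with hB
  have hexpge : ∀ s : ℝ, 0 ≤ s → (1:ℝ) ≤ Real.exp (ΛA * s) := fun s hs =>
    Real.one_le_exp (by positivity)
  have hBnn : 0 ≤ B := by
    rw [hB]
    have := hexpge t ht
    have h1 : 0 ≤ (Λ₁ * LA / ΛA) := by positivity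
    nlinarith
  have hfC : ∀ s ∈ Set.Icc (0:ℝ) t, f s ≤ C.toReal := fun s hs =>
    ENNReal.toReal_mono hCfin.ne (hC s hs)
  have hineq : ∀ s ∈ Set.Icc (0:ℝ) t, f s ≤ B + Λ₁ * ∫ r in Set.Ioc (0:ℝ) s, f r := by
    intro s hs
    refine (hkey s hs.1).trans ?_
    have hmono : LU + Λ₁ * s + (Λ₁ * LA / ΛA) * (Real.exp (ΛA * s) - 1) ≤ B := by
      rw [hB]
      have h1 : Real.exp (ΛA * s) ≤ Real.exp (ΛA * t) := by
        apply Real.exp_le_exp.mpr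
        nlinarith [hs.1, hs.2]
      have h2 : 0 ≤ (Λ₁ * LA / ΛA) := by positivity
      nlinarith [hs.2]
    linarith
  have hgron := gronwall_iter ht hΛ₁.le hBnn ENNReal.toReal_nonneg (hfint t ht) hfC hineq
  have hfin : F t = ENNReal.ofReal (f t) := (ENNReal.ofReal_toReal (hc_fin t ht).ne).symm
  calc F t = ENNReal.ofReal (f t) := hfin
    _ ≤ ENNReal.ofReal (B * Real.exp (Λ₁ * t)) := ENNReal.ofReal_le_ofReal hgron
end

section
/- Let U and A be Polish spaces and let t ↦ μ_t be a measurable map from [0,∞) to the Borel probability measures on U × A, with U-marginal μ_t^U. Let ψ_U : U → [0,∞) and ψ_A : A → [0,∞) be continuous, let β₁ > 1 and L₁, L_ψ, Λ_ψ > 0, and let ψ : U × A × [0,∞) → [1,∞) be continuous with ψ(u,a,r)^{β₁} ≤ L₁(1 + ψ_U(u) + ψ_A(a)) for all (u,a,r). Assume ∫ (1 + ψ_U(u) + ψ_A(a)) μ_r(du × da) ≤ L_ψ e^{Λ_ψ r} for all r ≥ 0. Let f ∈ C_b(U), a_f ≥ 0, and let h be a continuous function on U × A × [0,∞) with |h(u,a,r)|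 ≤ a_f ψ(u,a,r), and suppose ∫ f dμ_t^U − ∫ f dμ_s^U = ∫_s^t ∫_{U×A} h(u,a,r) μ_r(du × da) dr for all 0 ≤ s ≤ t. Then for all 0 ≤ s ≤ t: | ∫ f dμ_t^U − ∫ f dμ_s^U | ≤ a_f (t − s)^{1 − 1/β₁} ( L₁ L_ψ (e^{Λ_ψ t} − e^{Λ_ψ s}) / Λ_ψ )^{1/β₁}. -/
open MeasureTheory Filter
open scoped Topology ENNReal

/-- Hölder's inequality with the second function constant `1`: the `L¹` norm of a
nonnegative function is bounded by its `Lᵖ` norm times `μ(univ)^(1/q)`. -/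
lemma statement13_aux_holder {α : Type*} [MeasurableSpace α] (ν : Measure α)
    {g : α → ℝ≥0∞} (hg : AEMeasurable g ν) {p q : ℝ} (hpq : p.HolderConjugate q) :
    ∫⁻ a, g a ∂ν ≤ (∫⁻ a, g a ^ p ∂ν) ^ (1 / p) * (ν Set.univ) ^ (1 / q) := by
  have := ENNReal.lintegral_mul_le_Lp_mul_Lq ν hpq hg
    (aemeasurable_const (b := (1 : ℝ≥0∞)))
  simpa [ENNReal.one_rpow, lintegral_const] using this

/-- The equicontinuity estimate for solutions of the Kolmogorov forward
equation of a regular controlled martingale problem: if `|h| ≤ a_f ψ`, `ψ ≥ 1`,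
`ψ^{β₁} ≤ L₁ (1 + ψ_U + ψ_A)`, and the `(1 + ψ_U + ψ_A)`-moments of `μ_r` grow at most like
`L_ψ e^{Λ_ψ r}`, then the forward-equation identity for `f` implies
`|∫ f dμ_t^U − ∫ f dμ_s^U| ≤ a_f (t−s)^{1−1/β₁} (L₁ L_ψ (e^{Λ_ψ t} − e^{Λ_ψ s})/Λ_ψ)^{1/β₁}`. -/
theorem statement13
    {U A : Type*} [TopologicalSpace U] [PolishSpace U] [MeasurableSpace U] [BorelSpace U]
    [TopologicalSpace A] [PolishSpace A] [MeasurableSpace A] [BorelSpace A]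
    (μ : ℝ → Measure (U × A)) (hμprob : ∀ t, IsProbabilityMeasure (μ t))
    (hμmeas : ∀ g : BoundedContinuousFunction (U × A) ℝ,
      Measurable fun t => ∫ x, g x ∂(μ t))
    (ψU : U → ℝ) (ψA : A → ℝ) (hψUc : Continuous ψU) (hψAc : Continuous ψA)
    (hψU0 : ∀ u, 0 ≤ ψU u) (hψA0 : ∀ a, 0 ≤ ψA a)
    (β₁ L₁ Lψ Λψ : ℝ) (hβ₁ : 1 < β₁) (hL₁ : 0 < L₁) (hLψ : 0 < Lψ) (hΛψ : 0 < Λψ)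
    (ψ : U × A × ℝ → ℝ) (hψc : Continuous ψ) (hψ1 : ∀ x, 1 ≤ ψ x)
    (hψβ : ∀ (u : U) (a : A) (r : ℝ), 0 ≤ r →
      ψ (u, a, r) ^ β₁ ≤ L₁ * (1 + ψU u + ψA a))
    (hmom : ∀ r : ℝ, 0 ≤ r →
      (∫⁻ x : U × A, ENNReal.ofReal (1 + ψU x.1 + ψA x.2) ∂(μ r))
        ≤ ENNReal.ofReal (Lψ * Real.exp (Λψ * r)))
    (f : BoundedContinuousFunction U ℝ) (af : ℝ) (haf : 0 ≤ af)
    (h : U × A × ℝ → ℝ) (hhc : Continuous h)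
    (hhb : ∀ (u : U) (a : A) (r : ℝ), 0 ≤ r → |h (u, a, r)| ≤ af * ψ (u, a, r))
    (hfe : ∀ s t : ℝ, 0 ≤ s → s ≤ t →
      (∫ u, f u ∂((μ t).map Prod.fst)) - (∫ u, f u ∂((μ s).map Prod.fst))
        = ∫ r in Set.Ioc s t, ∫ x : U × A, h (x.1, x.2, r) ∂(μ r)) :
    ∀ s t : ℝ, 0 ≤ s → s ≤ t →
      |(∫ u, f u ∂((μ t).map Prod.fst)) - (∫ u, f u ∂((μ s).map Prod.fst))|
        ≤ af * (t - s) ^ (1 - 1 / β₁)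
            * (L₁ * Lψ * (Real.exp (Λψ * t) - Real.exp (Λψ * s)) / Λψ) ^ (1 / β₁) := by
  intro s t hs hst
  have hβpos : (0 : ℝ) < β₁ := by linarith
  have hinv : (0 : ℝ) < 1 / β₁ := by positivity
  have hinvlt : (1 : ℝ) / β₁ < 1 := by rw [div_lt_one hβpos]; exact hβ₁
  have h1β : (0 : ℝ) < 1 - 1 / β₁ := by linarith
  rcases eq_or_lt_of_le hst with rfl | hlt
  · simp only [sub_self, abs_zero, zero_div]
    positivity
  have hpq : β₁.HolderConjugate (Real.conjExponent β₁) := Real.HolderConjugate.conjExponent hβ₁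
  set q := Real.conjExponent β₁ with hq
  have hqinv : (1 : ℝ) / q = 1 - 1 / β₁ := by
    rw [one_div, one_div, ← hpq.one_sub_inv]
  -- pointwise-in-time bound for the inner integral
  have key : ∀ r : ℝ, 0 ≤ r →
      |∫ x : U × A, h (x.1, x.2, r) ∂(μ r)|
        ≤ af * ((L₁ * Lψ) ^ (1 / β₁) * Real.exp (Λψ * r) ^ (1 / β₁)) := by
    intro r hr
    haveI := hμprob r
    have hwc : Continuous fun x : U × A => 1 + ψU x.1 + ψA x.2 :=
      (continuous_const.add (hψUc.comp continuous_fst)).add (hψAc.comp continuous_snd)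
    have hw0 : ∀ x : U × A, 0 ≤ 1 + ψU x.1 + ψA x.2 := fun x => by
      linarith [hψU0 x.1, hψA0 x.2]
    have hψrc : Continuous fun x : U × A => ψ (x.1, x.2, r) :=
      hψc.comp (continuous_fst.prodMk (continuous_snd.prodMk continuous_const))
    have hψr0 : ∀ x : U × A, 0 ≤ ψ (x.1, x.2, r) := fun x => zero_le_one.trans (hψ1 _)
    have hψle : ∀ x : U × A, ψ (x.1, x.2, r) ≤ L₁ * (1 + ψU x.1 + ψA x.2) := by
      intro x
      calc ψ (x.1, x.2, r) = ψ (x.1, x.2, r) ^ (1 : ℝ) := (Real.rpow_one _).symm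
        _ ≤ ψ (x.1, x.2, r) ^ β₁ := Real.rpow_le_rpow_of_exponent_le (hψ1 _) hβ₁.le
        _ ≤ L₁ * (1 + ψU x.1 + ψA x.2) := hψβ x.1 x.2 r hr
    have hwint : Integrable (fun x : U × A => 1 + ψU x.1 + ψA x.2) (μ r) := by
      refine ⟨hwc.aestronglyMeasurable, ?_⟩
      rw [hasFiniteIntegral_iff_ofReal (ae_of_all _ hw0)]
      exact (hmom r hr).trans_lt ENNReal.ofReal_lt_top
    have hψint : Integrable (fun x : U × A => ψ (x.1, x.2, r)) (μ r) := by
      refine (hwint.const_mul L₁).mono hψrc.aestronglyMeasurable (ae_of_all _ fun x => ?_)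
      rw [Real.norm_eq_abs, Real.norm_eq_abs, abs_of_nonneg (hψr0 x),
        abs_of_nonneg (mul_nonneg hL₁.le (hw0 x))]
      exact hψle x
    have hhrc : Continuous fun x : U × A => h (x.1, x.2, r) :=
      hhc.comp (continuous_fst.prodMk (continuous_snd.prodMk continuous_const))
    have hhint : Integrable (fun x : U × A => h (x.1, x.2, r)) (μ r) := by
      refine (hψint.const_mul af).mono hhrc.aestronglyMeasurable (ae_of_all _ fun x => ?_)
      rw [Real.norm_eq_abs, Real.norm_eq_abs, abs_of_nonneg (mul_nonneg haf (hψr0 x))]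
      exact hhb x.1 x.2 r hr
    have hmm : AEMeasurable (fun x : U × A => ENNReal.ofReal (ψ (x.1, x.2, r))) (μ r) :=
      (ENNReal.measurable_ofReal.comp hψrc.measurable).aemeasurable
    have step1 := statement13_aux_holder (μ r) hmm hpq
    rw [measure_univ, ENNReal.one_rpow, mul_one] at step1
    have step2 : (∫⁻ x : U × A, ENNReal.ofReal (ψ (x.1, x.2, r)) ^ β₁ ∂(μ r))
        ≤ ENNReal.ofReal (L₁ * Lψ * Real.exp (Λψ * r)) := by
      calc ∫⁻ x : U × A, ENNReal.ofReal (ψ (x.1, x.2, r)) ^ β₁ ∂(μ r)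
          = ∫⁻ x : U × A, ENNReal.ofReal (ψ (x.1, x.2, r) ^ β₁) ∂(μ r) := by
            refine lintegral_congr fun x => ?_
            exact ENNReal.ofReal_rpow_of_pos (zero_lt_one.trans_le (hψ1 _))
        _ ≤ ∫⁻ x : U × A, ENNReal.ofReal L₁ * ENNReal.ofReal (1 + ψU x.1 + ψA x.2) ∂(μ r) := by
            refine lintegral_mono fun x => ?_
            rw [← ENNReal.ofReal_mul hL₁.le]
            exact ENNReal.ofReal_le_ofReal (hψβ x.1 x.2 r hr)
        _ = ENNReal.ofReal L₁ * ∫⁻ x : U × A, ENNReal.ofReal (1 + ψU x.1 + ψA x.2) ∂(μ r) :=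
            lintegral_const_mul' _ _ ENNReal.ofReal_ne_top
        _ ≤ ENNReal.ofReal L₁ * ENNReal.ofReal (Lψ * Real.exp (Λψ * r)) :=
            mul_le_mul_right (hmom r hr) _
        _ = ENNReal.ofReal (L₁ * Lψ * Real.exp (Λψ * r)) := by
            rw [← ENNReal.ofReal_mul hL₁.le, ← mul_assoc]
    have step3 : (∫⁻ x : U × A, ENNReal.ofReal (ψ (x.1, x.2, r)) ∂(μ r))
        ≤ ENNReal.ofReal ((L₁ * Lψ) ^ (1 / β₁) * Real.exp (Λψ * r) ^ (1 / β₁)) := by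
      refine step1.trans ?_
      refine (ENNReal.rpow_le_rpow step2 hinv.le).trans_eq ?_
      rw [ENNReal.ofReal_rpow_of_pos (by positivity),
        Real.mul_rpow (by positivity) (Real.exp_pos _).le]
    have hψIle : ∫ x : U × A, ψ (x.1, x.2, r) ∂(μ r)
        ≤ (L₁ * Lψ) ^ (1 / β₁) * Real.exp (Λψ * r) ^ (1 / β₁) := by
      rw [integral_eq_lintegral_of_nonneg_ae (ae_of_all _ hψr0) hψrc.aestronglyMeasurable]
      exact ENNReal.toReal_le_of_le_ofReal (by positivity) step3
    calc |∫ x : U × A, h (x.1, x.2, r) ∂(μ r)|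
        ≤ ∫ x : U × A, |h (x.1, x.2, r)| ∂(μ r) := by
          simpa [Real.norm_eq_abs] using
            norm_integral_le_integral_norm (μ := μ r) (fun x : U × A => h (x.1, x.2, r))
      _ ≤ ∫ x : U × A, af * ψ (x.1, x.2, r) ∂(μ r) :=
          integral_mono hhint.abs (hψint.const_mul af) fun x => hhb x.1 x.2 r hr
      _ = af * ∫ x : U × A, ψ (x.1, x.2, r) ∂(μ r) := integral_const_mul af _
      _ ≤ af * ((L₁ * Lψ) ^ (1 / β₁) * Real.exp (Λψ * r) ^ (1 / β₁)) :=
          mul_le_mul_of_nonneg_left hψIle haf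
  -- time integral estimates
  have hexpc : Continuous fun r : ℝ => Real.exp (Λψ * r) :=
    Real.continuous_exp.comp (continuous_const.mul continuous_id)
  have hgc : Continuous fun r : ℝ => Real.exp (Λψ * r) ^ (1 / β₁) :=
    hexpc.rpow_const fun x => Or.inl (Real.exp_pos _).ne'
  have hexpint : IntegrableOn (fun r => Real.exp (Λψ * r)) (Set.Ioc s t) :=
    hexpc.integrableOn_Ioc
  have hval : ∫ r in Set.Ioc s t, Real.exp (Λψ * r)
      = (Real.exp (Λψ * t) - Real.exp (Λψ * s)) / Λψ := by
    rw [← intervalIntegral.integral_of_le hst,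
      intervalIntegral.integral_comp_mul_left (fun x => Real.exp x) hΛψ.ne',
      integral_exp]
    rw [smul_eq_mul]; ring
  have hΔpos : 0 < (Real.exp (Λψ * t) - Real.exp (Λψ * s)) / Λψ := by
    apply div_pos _ hΛψ
    have := Real.exp_lt_exp.mpr (mul_lt_mul_of_pos_left hlt hΛψ)
    linarith
  have timekey : ∫ r in Set.Ioc s t, Real.exp (Λψ * r) ^ (1 / β₁)
      ≤ (t - s) ^ (1 - 1 / β₁)
        * ((Real.exp (Λψ * t) - Real.exp (Λψ * s)) / Λψ) ^ (1 / β₁) := by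
    have hg0 : ∀ r : ℝ, 0 ≤ Real.exp (Λψ * r) ^ (1 / β₁) := fun r =>
      Real.rpow_nonneg (Real.exp_pos _).le _
    have hmm2 : AEMeasurable (fun r : ℝ => ENNReal.ofReal (Real.exp (Λψ * r) ^ (1 / β₁)))
        (volume.restrict (Set.Ioc s t)) :=
      (ENNReal.measurable_ofReal.comp hgc.measurable).aemeasurable
    have step1 := statement13_aux_holder (volume.restrict (Set.Ioc s t)) hmm2 hpq
    have hpow : ∀ r : ℝ, (ENNReal.ofReal (Real.exp (Λψ * r) ^ (1 / β₁))) ^ β₁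
        = ENNReal.ofReal (Real.exp (Λψ * r)) := by
      intro r
      rw [ENNReal.ofReal_rpow_of_pos (Real.rpow_pos_of_pos (Real.exp_pos _) _), one_div,
        Real.rpow_inv_rpow (Real.exp_pos _).le hβpos.ne']
    have step2 : (∫⁻ r in Set.Ioc s t, ENNReal.ofReal (Real.exp (Λψ * r) ^ (1 / β₁)) ^ β₁)
        = ENNReal.ofReal ((Real.exp (Λψ * t) - Real.exp (Λψ * s)) / Λψ) := by
      simp_rw [hpow]
      rw [← hval,
        ← ofReal_integral_eq_lintegral_ofReal hexpint (ae_of_all _ fun r => (Real.exp_pos _).le)]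
    rw [step2, Measure.restrict_apply_univ, Real.volume_Ioc] at step1
    have step3 : (∫⁻ r in Set.Ioc s t, ENNReal.ofReal (Real.exp (Λψ * r) ^ (1 / β₁)))
        ≤ ENNReal.ofReal ((t - s) ^ (1 - 1 / β₁)
            * ((Real.exp (Λψ * t) - Real.exp (Λψ * s)) / Λψ) ^ (1 / β₁)) := by
      refine step1.trans_eq ?_
      rw [ENNReal.ofReal_rpow_of_pos hΔpos,
        ENNReal.ofReal_rpow_of_pos (by linarith : (0:ℝ) < t - s), hqinv,
        ← ENNReal.ofReal_mul (Real.rpow_nonneg hΔpos.le _), mul_comm]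
    rw [integral_eq_lintegral_of_nonneg_ae (ae_of_all _ hg0) hgc.aestronglyMeasurable]
    exact ENNReal.toReal_le_of_le_ofReal
      (mul_nonneg (Real.rpow_nonneg (by linarith) _) (Real.rpow_nonneg hΔpos.le _)) step3
  -- combine
  rw [hfe s t hs hst]
  have habs : |∫ r in Set.Ioc s t, ∫ x : U × A, h (x.1, x.2, r) ∂(μ r)|
      ≤ ∫ r in Set.Ioc s t, |∫ x : U × A, h (x.1, x.2, r) ∂(μ r)| := by
    simpa [Real.norm_eq_abs] using norm_integral_le_integral_norm
      (μ := volume.restrict (Set.Ioc s t)) (fun r => ∫ x : U × A, h (x.1, x.2, r) ∂(μ r))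
  have hbint : IntegrableOn
      (fun r => af * ((L₁ * Lψ) ^ (1 / β₁) * Real.exp (Λψ * r) ^ (1 / β₁)))
      (Set.Ioc s t) :=
    (continuous_const.mul (continuous_const.mul hgc)).integrableOn_Ioc
  have hmono : ∫ r in Set.Ioc s t, |∫ x : U × A, h (x.1, x.2, r) ∂(μ r)|
      ≤ ∫ r in Set.Ioc s t, af * ((L₁ * Lψ) ^ (1 / β₁) * Real.exp (Λψ * r) ^ (1 / β₁)) := by
    refine integral_mono_of_nonneg (ae_of_all _ fun r => abs_nonneg _) hbint ?_
    exact (ae_restrict_iff' measurableSet_Ioc).2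
      (ae_of_all _ fun r hr => key r (hs.trans hr.1.le))
  have hfinal : ∫ r in Set.Ioc s t, af * ((L₁ * Lψ) ^ (1 / β₁) * Real.exp (Λψ * r) ^ (1 / β₁))
      ≤ af * (t - s) ^ (1 - 1 / β₁)
        * (L₁ * Lψ * (Real.exp (Λψ * t) - Real.exp (Λψ * s)) / Λψ) ^ (1 / β₁) := by
    have heq : ∫ r in Set.Ioc s t, af * ((L₁ * Lψ) ^ (1 / β₁) * Real.exp (Λψ * r) ^ (1 / β₁))
        = (af * (L₁ * Lψ) ^ (1 / β₁)) * ∫ r in Set.Ioc s t, Real.exp (Λψ * r) ^ (1 / β₁) := by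
      rw [← integral_const_mul]
      exact integral_congr_ae (ae_of_all _ fun r => by ring)
    rw [heq]
    have hstep := mul_le_mul_of_nonneg_left timekey
      (mul_nonneg haf (Real.rpow_nonneg (mul_nonneg hL₁.le hLψ.le) (1 / β₁)))
    refine hstep.trans_eq ?_
    rw [show L₁ * Lψ * (Real.exp (Λψ * t) - Real.exp (Λψ * s)) / Λψ
        = (L₁ * Lψ) * ((Real.exp (Λψ * t) - Real.exp (Λψ * s)) / Λψ) by ring,
      Real.mul_rpow (by positivity) hΔpos.le]
    ring
  exact habs.trans (hmono.trans hfinal)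
end

section
/- Let S and A be Polish spaces, let (Ω,Σ,(F_t)_{t≥0},P) be a filtered probability space, let (s_t)_{t≥0} be a càdlàg (F_t)-adapted S-valued process with law(s_0) = υ, and let (π_t)_{t≥0} be a progressively measurable process with values in the Borel probability measures on A. Let f ∈ C_b(S) and let h : S × A × [0,∞) → ℝ be continuous with E[ ∫₀^t ∫_A |h(s_r, a, r)| π_r(da) dr ] < ∞ for all t ≥ 0. Suppose the process m_t := f(s_t) − f(s_0) − ∫₀^t ∫_A h(s_r, a, r) π_r(da) dr is an (F_t)-martingale. For each t ≥ 0 define the Borel probability measure μ_t on S × A by ∫ g dμ_t = E[ ∫_A g(s_t, a) π_t(da) ] for all bounded continuous g on S × A, and let μ_t^S denote its S-marginal. Then for all t ≥ 0: ∫_S f dμ_t^S − ∫_S f dυ = ∫₀^t ∫_{S×A} h(s, a, r) μ_r(ds × da) dr. -/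
open MeasureTheory Filter
open scoped Topology ENNReal

/-- Joint measurability of a right-continuous adapted-type process composed with a
nonnegative measurable time change. -/
lemma aux_path_meas {S : Type*} [TopologicalSpace S] [PolishSpace S] [MeasurableSpace S]
    [BorelSpace S] {Ω : Type*} {m0 : MeasurableSpace Ω} (s : ℝ → Ω → S)
    (hs_meas : ∀ t : ℝ, 0 ≤ t → Measurable (s t))
    (hs_right : ∀ ω : Ω, ∀ t : ℝ, 0 ≤ t → ContinuousWithinAt (fun r => s r ω) (Set.Ici t) t)
    (c : ℝ → ℝ) (hc : Measurable c) (hc0 : ∀ r, 0 ≤ c r) :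
    Measurable (fun p : ℝ × Ω => s (c p.1) p.2) := by
  -- dyadic upper approximations of the time
  set u : ℕ → ℝ → ℝ := fun n v => ((⌊v * 2 ^ n⌋ : ℝ) + 1) / 2 ^ n with hu
  have hpow : ∀ n : ℕ, (0:ℝ) < 2 ^ n := fun n => by positivity
  have hu_gt : ∀ n v, v < u n v := by
    intro n v
    rw [hu, lt_div_iff₀ (hpow n)]
    exact Int.lt_floor_add_one (v * 2 ^ n)
  have hu_le : ∀ n v, u n v ≤ v + (1/2) ^ n := by
    intro n v
    rw [hu]
    have h1 : ((⌊v * 2 ^ n⌋ : ℝ) + 1) ≤ v * 2 ^ n + 1 := by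
      have := Int.floor_le (v * 2 ^ n); linarith
    rw [div_le_iff₀ (hpow n)]
    calc ((⌊v * 2 ^ n⌋ : ℝ) + 1) ≤ v * 2 ^ n + 1 := h1
      _ = (v + (1/2)^n) * 2 ^ n := by
          rw [add_mul, div_pow, one_pow, div_mul_cancel₀ _ (hpow n).ne']
  have hu_tendsto : ∀ v : ℝ, Tendsto (fun n => u n v) atTop (𝓝[Set.Ici v] v) := by
    intro v
    rw [tendsto_nhdsWithin_iff]
    constructor
    · have h1 : Tendsto (fun n : ℕ => v + (1/2:ℝ) ^ n) atTop (𝓝 (v + 0)) :=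
        tendsto_const_nhds.add (tendsto_pow_atTop_nhds_zero_of_lt_one (by norm_num) (by norm_num))
      rw [add_zero] at h1
      exact tendsto_of_tendsto_of_tendsto_of_le_of_le tendsto_const_nhds h1
        (fun n => (hu_gt n v).le) (fun n => hu_le n v)
    · exact Eventually.of_forall fun n => (hu_gt n v).le
  -- the approximating processes
  have hmeasn : ∀ n : ℕ, Measurable (fun p : ℝ × Ω => s (max 0 (u n (c p.1))) p.2) := by
    intro n
    have he : Measurable (fun q : Ω × ℤ => s (max 0 (((q.2 : ℝ) + 1) / 2 ^ n)) q.1) :=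
      measurable_from_prod_countable_left fun k =>
        hs_meas (max 0 (((k : ℝ) + 1) / 2 ^ n)) (le_max_left _ _)
    have hcomp : Measurable (fun p : ℝ × Ω => (p.2, ⌊c p.1 * 2 ^ n⌋)) :=
      measurable_snd.prodMk (((hc.comp measurable_fst).mul_const _).floor)
    have : (fun p : ℝ × Ω => s (max 0 (u n (c p.1))) p.2)
        = (fun q : Ω × ℤ => s (max 0 (((q.2 : ℝ) + 1) / 2 ^ n)) q.1)
          ∘ (fun p : ℝ × Ω => (p.2, ⌊c p.1 * 2 ^ n⌋)) := rfl
    rw [this]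
    exact he.comp hcomp
  apply measurable_of_tendsto_metrizable hmeasn
  rw [tendsto_pi_nhds]
  intro p
  have h0 : ∀ n, max 0 (u n (c p.1)) = u n (c p.1) := fun n =>
    max_eq_right ((hc0 p.1).trans (hu_gt n (c p.1)).le)
  simp only [h0]
  exact (hs_right p.2 (c p.1) (hc0 p.1)).tendsto.comp (hu_tendsto (c p.1))

/-- Measurability of a parametric integral against a weakly-measurable family of
probability measures (a Carathéodory-type argument). -/
lemma aux_core {S A : Type*} [TopologicalSpace S] [PolishSpace S] [MeasurableSpace S]
    [BorelSpace S] [TopologicalSpace A] [PolishSpace A] [MeasurableSpace A] [BorelSpace A]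
    {Ω : Type*} {m0 : MeasurableSpace Ω}
    (κ : ℝ × Ω → Measure A) (hκprob : ∀ p, IsProbabilityMeasure (κ p))
    (hκ : ∀ g : BoundedContinuousFunction A ℝ, Measurable fun p : ℝ × Ω => ∫ a, g a ∂κ p)
    (σ : ℝ × Ω → S) (hσ : Measurable σ)
    (φ : S × A × ℝ → ℝ) (hφc : Continuous φ) (C : ℝ) (hφb : ∀ z, |φ z| ≤ C) :
    Measurable fun p : ℝ × Ω => ∫ a, φ (σ p, a, p.1) ∂κ p := by
  set Ψ : (S × ℝ) → (ℝ × Ω) → ℝ := fun q p => ∫ a, φ (q.1, a, q.2) ∂κ p with hΨ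
  have hΨmeas : ∀ q, Measurable (Ψ q) := by
    intro q
    have hcont : Continuous fun a => φ (q.1, a, q.2) :=
      hφc.comp (continuous_const.prodMk (continuous_id.prodMk continuous_const))
    exact hκ (BoundedContinuousFunction.ofNormedAddCommGroup _ hcont C
      (fun a => by rw [Real.norm_eq_abs]; exact hφb _))
  have hΨcont : ∀ p, Continuous fun q => Ψ q p := by
    intro p
    have := hκprob p
    apply continuous_of_dominated (bound := fun _ : A => C)
    · exact fun q => (hφc.comp (continuous_const.prodMk
        (continuous_id.prodMk continuous_const))).aestronglyMeasurable
    · exact fun q => Eventually.of_forall fun a => by rw [Real.norm_eq_abs]; exact hφb _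
    · exact integrable_const C
    · exact Eventually.of_forall fun a =>
        hφc.comp ((continuous_fst).prodMk (continuous_const.prodMk continuous_snd))
  have huncurry : Measurable (Function.uncurry Ψ) :=
    measurable_uncurry_of_continuous_of_measurable hΨcont hΨmeas
  have : (fun p : ℝ × Ω => ∫ a, φ (σ p, a, p.1) ∂κ p)
      = fun p => Function.uncurry Ψ ((σ p, p.1), p) := rfl
  rw [this]
  exact huncurry.comp ((hσ.prodMk measurable_fst).prodMk measurable_id)

lemma aux_min_int {X : Type*} [MeasurableSpace X] [TopologicalSpace X]
    [OpensMeasurableSpace X] (ν : Measure X) [IsProbabilityMeasure ν] (ψ : X → ℝ)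
    (hψ : Continuous ψ) (n : ℕ) : Integrable (fun a => min |ψ a| n) ν := by
  refine Integrable.mono' (integrable_const (n:ℝ))
    ((hψ.abs.min continuous_const).aestronglyMeasurable) (Filter.Eventually.of_forall fun a => ?_)
  rw [Real.norm_eq_abs, abs_of_nonneg (le_min (abs_nonneg _) (Nat.cast_nonneg n))]
  exact min_le_right _ _

/-- The time-marginal laws of a relaxed controlled martingale-problem solution
satisfy the Kolmogorov forward equation: if `m_t = f(s_t) − f(s_0) − ∫₀ᵗ ∫_A h(s_r,a,r) π_r(da) dr`
is a martingale and `μ_t` is the joint law of the state and the relaxed control, then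
`∫ f dμ_t^S − ∫ f dυ = ∫₀ᵗ ∫_{S×A} h(s,a,r) μ_r(ds×da) dr` for all `t ≥ 0`. -/
theorem statement16
    {S A : Type*} [TopologicalSpace S] [PolishSpace S] [MeasurableSpace S] [BorelSpace S]
    [TopologicalSpace A] [PolishSpace A] [MeasurableSpace A] [BorelSpace A]
    {Ω : Type*} {m0 : MeasurableSpace Ω} (P : Measure Ω) [IsProbabilityMeasure P]
    (ℱ : Filtration ℝ m0)
    (s : ℝ → Ω → S)
    (hs_adapted : ∀ t : ℝ, 0 ≤ t → Measurable[ℱ t] (s t))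
    (hs_cadlag : ∀ ω : Ω,
      (∀ t : ℝ, 0 ≤ t → ContinuousWithinAt (fun r => s r ω) (Set.Ici t) t) ∧
      (∀ t : ℝ, 0 < t → ∃ l : S,
        Tendsto (fun r => s r ω) (nhdsWithin t (Set.Ioo 0 t)) (𝓝 l)))
    (υ : Measure S) (hlaw : P.map (s 0) = υ)
    (π : ℝ → Ω → Measure A) (hπprob : ∀ t ω, IsProbabilityMeasure (π t ω))
    (hπ_adapted : ∀ t : ℝ, 0 ≤ t → ∀ g : BoundedContinuousFunction A ℝ,
      Measurable[ℱ t] fun ω => ∫ a, g a ∂(π t ω))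
    (hπ_prog : ∀ t : ℝ, 0 ≤ t → ∀ g : BoundedContinuousFunction A ℝ,
      @Measurable (Set.Icc (0:ℝ) t × Ω) ℝ
        (@Prod.instMeasurableSpace _ _ _ (ℱ t)) _
        (fun q => ∫ a, g a ∂(π (q.1 : ℝ) q.2)))
    (f : BoundedContinuousFunction S ℝ)
    (h : S × A × ℝ → ℝ) (hh_cont : Continuous h)
    (hh_int : ∀ t : ℝ, 0 ≤ t →
      (∫⁻ ω, (∫⁻ r in Set.Ioc (0:ℝ) t, ∫⁻ a, ENNReal.ofReal |h (s r ω, a, r)| ∂(π r ω)) ∂P) < ⊤)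
    (m : ℝ → Ω → ℝ)
    (hmdef : ∀ t ω, m t ω = f (s t ω) - f (s 0 ω)
        - ∫ r in Set.Ioc (0:ℝ) t, ∫ a, h (s r ω, a, r) ∂(π r ω))
    (hm_int : ∀ t : ℝ, 0 ≤ t → Integrable (m t) P)
    (hm_adapted : ∀ t : ℝ, 0 ≤ t → Measurable[ℱ t] (m t))
    (hm_mart : ∀ t₁ t₂ : ℝ, 0 ≤ t₁ → t₁ ≤ t₂ → P[m t₂|ℱ t₁] =ᵐ[P] m t₁)
    (μ : ℝ → Measure (S × A)) (hμprob : ∀ t, IsProbabilityMeasure (μ t))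
    (hμdef : ∀ t : ℝ, 0 ≤ t → ∀ g : BoundedContinuousFunction (S × A) ℝ,
      ∫ x, g x ∂(μ t) = ∫ ω, (∫ a, g (s t ω, a) ∂(π t ω)) ∂P) :
    ∀ t : ℝ, 0 ≤ t →
      (∫ x, f x ∂((μ t).map Prod.fst)) - (∫ x, f x ∂υ)
        = ∫ r in Set.Ioc (0:ℝ) t, ∫ x : S × A, h (x.1, x.2, r) ∂(μ r) := by
  intro t ht
  -- the clamped time
  set c : ℝ → ℝ := fun r => max 0 (min r t) with hcdef
  have hc_meas : Measurable c := measurable_const.max (measurable_id.min measurable_const)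
  have hc0 : ∀ r, 0 ≤ c r := fun r => le_max_left _ _
  have hct : ∀ r, c r ≤ t := fun r => max_le ht (min_le_right _ _)
  have hc_id : ∀ r ∈ Set.Ioc (0:ℝ) t, c r = r := fun r hr => by
    rw [hcdef]; dsimp only; rw [min_eq_left hr.2, max_eq_right hr.1.le]
  have hs_meas : ∀ r : ℝ, 0 ≤ r → Measurable (s r) :=
    fun r hr => (hs_adapted r hr).mono (ℱ.le r) le_rfl
  have hσ : Measurable (fun p : ℝ × Ω => s (c p.1) p.2) :=
    aux_path_meas s hs_meas (fun ω r hr => (hs_cadlag ω).1 r hr) c hc_meas hc0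
  have hκprob : ∀ p : ℝ × Ω, IsProbabilityMeasure (π (c p.1) p.2) := fun p => hπprob _ _
  have hκ : ∀ g : BoundedContinuousFunction A ℝ,
      Measurable fun p : ℝ × Ω => ∫ a, g a ∂π (c p.1) p.2 := by
    intro g
    have hmap : @Measurable (ℝ × Ω) (Set.Icc (0:ℝ) t × Ω) _
        (@Prod.instMeasurableSpace _ _ _ (ℱ t))
        (fun p => (⟨c p.1, ⟨hc0 p.1, hct p.1⟩⟩, p.2)) :=
      Measurable.prodMk (Measurable.subtype_mk (hc_meas.comp measurable_fst))
        (measurable_snd.mono le_rfl (ℱ.le t))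
    exact (hπ_prog t ht g).comp hmap
  -- truncations of h
  set hn : ℕ → S × A × ℝ → ℝ := fun n z => max (-(n:ℝ)) (min (h z) n) with hndef
  have hn_cont : ∀ n, Continuous (hn n) :=
    fun n => continuous_const.max ((hh_cont.min continuous_const))
  have hn_bound : ∀ n z, |hn n z| ≤ n := by
    intro n z
    have h0 : (0:ℝ) ≤ n := Nat.cast_nonneg n
    rw [abs_le]
    refine ⟨le_max_left _ _, max_le (by linarith) (min_le_right _ _)⟩
  have hn_le : ∀ n z, |hn n z| ≤ |h z| := by
    intro n z
    have h0 : (0:ℝ) ≤ n := Nat.cast_nonneg n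
    rw [abs_le]
    constructor
    · exact le_max_of_le_right (le_min (neg_abs_le _) (le_trans (by simp [abs_nonneg]) h0))
    · exact max_le (le_trans (by linarith) (abs_nonneg _))
        ((min_le_left _ _).trans (le_abs_self _))
  have hn_tendsto : ∀ z, Tendsto (fun n => hn n z) atTop (𝓝 (h z)) := by
    intro z
    apply tendsto_const_nhds.congr'
    filter_upwards [eventually_ge_atTop ⌈|h z|⌉₊] with n hnz
    have hle : |h z| ≤ (n:ℝ) := (Nat.le_ceil _).trans (Nat.cast_le.2 hnz)
    rw [hndef]
    dsimp only
    rw [min_eq_left ((le_abs_self _).trans hle),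
      max_eq_right ((neg_le_neg hle).trans (neg_abs_le _))]
  -- the key parametric integrals
  set Kn : ℕ → ℝ × Ω → ℝ := fun n p => ∫ a, hn n (s (c p.1) p.2, a, p.1) ∂π (c p.1) p.2
    with hKndef
  set K' : ℝ × Ω → ℝ := fun p => ∫ a, h (s (c p.1) p.2, a, p.1) ∂π (c p.1) p.2 with hK'def
  set Ln : ℕ → ℝ × Ω → ℝ := fun n p => ∫ a, min |h (s (c p.1) p.2, a, p.1)| n ∂π (c p.1) p.2
    with hLndef
  set L : ℝ × Ω → ℝ≥0∞ :=
    fun p => ∫⁻ a, ENNReal.ofReal |h (s (c p.1) p.2, a, p.1)| ∂π (c p.1) p.2 with hLdef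
  have hKn_meas : ∀ n, Measurable (Kn n) := fun n =>
    aux_core _ hκprob hκ _ hσ (hn n) (hn_cont n) n (hn_bound n)
  have hLn_meas : ∀ n, Measurable (Ln n) := by
    intro n
    have h0 : (0:ℝ) ≤ n := Nat.cast_nonneg n
    exact aux_core _ hκprob hκ _ hσ (fun z => min |h z| n) ((hh_cont.abs).min continuous_const)
      n (fun z => by rw [abs_of_nonneg (le_min (abs_nonneg _) h0)]; exact min_le_right _ _)
  -- pointwise description of L via the bounded truncations Ln
  have hsup_ofReal : ∀ b : ℝ, 0 ≤ b → (⨆ n : ℕ, ENNReal.ofReal (min b n)) = ENNReal.ofReal b := by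
    intro b hb
    apply le_antisymm (iSup_le fun n => ENNReal.ofReal_le_ofReal (min_le_left _ _))
    exact le_iSup_of_le ⌈b⌉₊ (by rw [min_eq_left (Nat.le_ceil _)])
  have hL_eq : ∀ p, L p = ⨆ n, ENNReal.ofReal (Ln n p) := by
    intro p
    have := hκprob p
    have hψc : Continuous fun a => h (s (c p.1) p.2, a, p.1) :=
      hh_cont.comp (continuous_const.prodMk (continuous_id.prodMk continuous_const))
    have step1 : L p = ⨆ n : ℕ, ∫⁻ a, ENNReal.ofReal
        (min |h (s (c p.1) p.2, a, p.1)| n) ∂π (c p.1) p.2 := by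
      rw [hLdef]
      dsimp only
      rw [← lintegral_iSup]
      · exact lintegral_congr fun a => (hsup_ofReal _ (abs_nonneg _)).symm
      · exact fun n => ((hψc.abs.min continuous_const).measurable).ennreal_ofReal
      · intro n k hnk a
        exact ENNReal.ofReal_le_ofReal (min_le_min le_rfl (Nat.cast_le.2 hnk))
    rw [step1]
    refine iSup_congr fun n => ?_
    rw [← ofReal_integral_eq_lintegral_ofReal (aux_min_int _ _ hψc n)
      (Eventually.of_forall fun a => le_min (abs_nonneg _) (Nat.cast_nonneg n))]
  have hL_meas : Measurable L := by
    have : L = fun p => ⨆ n, ENNReal.ofReal (Ln n p) := funext hL_eq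
    rw [this]
    exact Measurable.iSup fun n => (hLn_meas n).ennreal_ofReal
  -- Tonelli bound
  have hLfin : ∫⁻ p, L p ∂((volume.restrict (Set.Ioc (0:ℝ) t)).prod P) < ⊤ := by
    rw [lintegral_prod_symm _ hL_meas.aemeasurable]
    refine lt_of_le_of_lt (le_of_eq ?_) (hh_int t ht)
    refine lintegral_congr fun ω => ?_
    refine setLIntegral_congr_fun measurableSet_Ioc (fun r hr => ?_)
    rw [hLdef]
    dsimp only
    rw [hc_id r hr]
  have hEL_meas : Measurable fun r => ∫⁻ ω, L (r, ω) ∂P := hL_meas.lintegral_prod_right'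
  have hprod_eq : ∫⁻ p, L p ∂((volume.restrict (Set.Ioc (0:ℝ) t)).prod P)
      = ∫⁻ r in Set.Ioc (0:ℝ) t, ∫⁻ ω, L (r, ω) ∂P := lintegral_prod _ hL_meas.aemeasurable
  have hfin_ae : ∀ᵐ r ∂(volume.restrict (Set.Ioc (0:ℝ) t)), ∫⁻ ω, L (r, ω) ∂P < ⊤ :=
    ae_lt_top hEL_meas (by rw [← hprod_eq]; exact hLfin.ne)
  -- convergence of the truncated integrals
  have hK'_lim : ∀ p, L p < ⊤ → Tendsto (fun n => Kn n p) atTop (𝓝 (K' p)) := by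
    intro p hp
    have := hκprob p
    have hψc : Continuous fun a => h (s (c p.1) p.2, a, p.1) :=
      hh_cont.comp (continuous_const.prodMk (continuous_id.prodMk continuous_const))
    apply tendsto_integral_of_dominated_convergence
      (bound := fun a => |h (s (c p.1) p.2, a, p.1)|)
    · exact fun n => ((hn_cont n).comp (continuous_const.prodMk
        (continuous_id.prodMk continuous_const))).aestronglyMeasurable
    · refine ⟨hψc.abs.aestronglyMeasurable, ?_⟩
      rw [HasFiniteIntegral]
      refine lt_of_le_of_lt (le_of_eq ?_) hp
      refine lintegral_congr fun a => ?_
      rw [Real.enorm_eq_ofReal_abs, abs_abs]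
    · exact fun n => Eventually.of_forall fun a => by
        rw [Real.norm_eq_abs]; exact hn_le n _
    · exact Eventually.of_forall fun a => hn_tendsto _
  have hK'_aemeas : AEMeasurable K' ((volume.restrict (Set.Ioc (0:ℝ) t)).prod P) :=
    aemeasurable_of_tendsto_metrizable_ae' (fun n => (hKn_meas n).aemeasurable)
      ((ae_lt_top hL_meas hLfin.ne).mono fun p hp => hK'_lim p hp)
  have hK'_bound : ∀ p, (‖K' p‖₊ : ℝ≥0∞) ≤ L p := fun p =>
    le_trans (enorm_integral_le_lintegral_enorm _)
      (le_of_eq (lintegral_congr fun a => by rw [Real.enorm_eq_ofReal_abs]))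
  have hK'_int : Integrable K' ((volume.restrict (Set.Ioc (0:ℝ) t)).prod P) :=
    ⟨hK'_aemeas.aestronglyMeasurable,
      lt_of_le_of_lt (lintegral_mono hK'_bound) hLfin⟩
  -- martingale side
  have int_Ft : Integrable (fun ω => f (s t ω)) P :=
    Integrable.mono' (integrable_const ‖f‖)
      ((f.continuous.measurable.comp (hs_meas t ht)).aestronglyMeasurable)
      (Eventually.of_forall fun ω => f.norm_coe_le_norm _)
  have int_F0 : Integrable (fun ω => f (s 0 ω)) P :=
    Integrable.mono' (integrable_const ‖f‖)
      ((f.continuous.measurable.comp (hs_meas 0 le_rfl)).aestronglyMeasurable)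
      (Eventually.of_forall fun ω => f.norm_coe_le_norm _)
  have hm0 : ∀ ω, m 0 ω = 0 := fun ω => by
    rw [hmdef]; simp [Set.Ioc_self]
  have hmt_zero : ∫ ω, m t ω ∂P = 0 := by
    haveI : SigmaFinite (P.trim (ℱ.le 0)) := inferInstance
    calc ∫ ω, m t ω ∂P = ∫ ω, (P[m t|ℱ 0]) ω ∂P := (integral_condExp (ℱ.le 0)).symm
      _ = ∫ ω, m 0 ω ∂P := integral_congr_ae (hm_mart 0 t le_rfl ht)
      _ = 0 := by simp [hm0]
  have hrw : (fun ω => ∫ r in Set.Ioc (0:ℝ) t, ∫ a, h (s r ω, a, r) ∂π r ω)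
      = fun ω => f (s t ω) - f (s 0 ω) - m t ω := by
    funext ω; rw [hmdef t ω]; ring
  have EQ2 : ∫ ω, (∫ r in Set.Ioc (0:ℝ) t, ∫ a, h (s r ω, a, r) ∂π r ω) ∂P
      = (∫ ω, f (s t ω) ∂P) - ∫ ω, f (s 0 ω) ∂P := by
    have int_sub : Integrable (fun ω => f (s t ω) - f (s 0 ω)) P := int_Ft.sub int_F0
    rw [hrw, integral_sub int_sub (hm_int t ht), integral_sub int_Ft int_F0, hmt_zero, sub_zero]
  -- identification of the marginals
  have hFt : ∫ x, f x ∂((μ t).map Prod.fst) = ∫ ω, f (s t ω) ∂P := by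
    rw [integral_map measurable_fst.aemeasurable f.continuous.aestronglyMeasurable]
    have hbcf := hμdef t ht (f.compContinuous ⟨Prod.fst, continuous_fst⟩)
    simp only [BoundedContinuousFunction.coe_compContinuous, ContinuousMap.coe_mk,
      Function.comp_apply] at hbcf
    rw [hbcf]
    refine integral_congr_ae (Eventually.of_forall fun ω => ?_)
    have := hπprob t ω
    simp
  have hF0 : ∫ x, f x ∂υ = ∫ ω, f (s 0 ω) ∂P := by
    rw [← hlaw, integral_map (hs_meas 0 le_rfl).aemeasurable
      f.continuous.aestronglyMeasurable]
  -- the key a.e. identity in the time variable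
  have EQ4 : ∀ᵐ r ∂(volume.restrict (Set.Ioc (0:ℝ) t)),
      ∫ ω, K' (r, ω) ∂P = ∫ x : S × A, h (x.1, x.2, r) ∂μ r := by
    filter_upwards [hfin_ae, ae_restrict_mem measurableSet_Ioc] with r hfin hr
    have hcr : c r = r := hc_id r hr
    have hr0 : (0:ℝ) ≤ r := hr.1.le
    have hKn_slice : ∀ n, Measurable fun ω => Kn n (r, ω) := fun n =>
      (hKn_meas n).comp measurable_prodMk_left
    have hLn_slice : ∀ n, Measurable fun ω => Ln n (r, ω) := fun n =>
      (hLn_meas n).comp measurable_prodMk_left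
    have hL_slice : Measurable fun ω => L (r, ω) := hL_meas.comp measurable_prodMk_left
    have hLlt : ∀ᵐ ω ∂P, L (r, ω) < ⊤ := ae_lt_top hL_slice hfin.ne
    have hhc' : Continuous fun x : S × A => h (x.1, x.2, r) :=
      hh_cont.comp (continuous_fst.prodMk (continuous_snd.prodMk continuous_const))
    -- Step A: test identity for the truncations
    have stepA : ∀ n : ℕ, ∫ x : S × A, hn n (x.1, x.2, r) ∂μ r = ∫ ω, Kn n (r, ω) ∂P := by
      intro n
      have hgc : Continuous fun x : S × A => hn n (x.1, x.2, r) :=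
        (hn_cont n).comp (continuous_fst.prodMk (continuous_snd.prodMk continuous_const))
      have hconv := hμdef r hr0 (BoundedContinuousFunction.ofNormedAddCommGroup _ hgc n
        (fun x => by rw [Real.norm_eq_abs]; exact hn_bound n _))
      simp only [BoundedContinuousFunction.coe_ofNormedAddCommGroup] at hconv
      rw [hconv]
      refine integral_congr_ae (Eventually.of_forall fun ω => ?_)
      rw [hKndef]
      dsimp only
      rw [hcr]
    -- Step B: convergence of the ω-averages
    have stepB : Tendsto (fun n => ∫ ω, Kn n (r, ω) ∂P) atTop (𝓝 (∫ ω, K' (r, ω) ∂P)) := by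
      apply tendsto_integral_of_dominated_convergence (bound := fun ω => (L (r, ω)).toReal)
      · exact fun n => (hKn_slice n).aestronglyMeasurable
      · exact integrable_toReal_of_lintegral_ne_top hL_slice.aemeasurable hfin.ne
      · intro n
        filter_upwards [hLlt] with ω hω
        have h1 : (‖Kn n (r, ω)‖₊ : ℝ≥0∞) ≤ L (r, ω) := by
          refine le_trans (enorm_integral_le_lintegral_enorm _) (lintegral_mono fun a => ?_)
          rw [Real.enorm_eq_ofReal_abs]
          exact ENNReal.ofReal_le_ofReal (hn_le n _)
        calc ‖Kn n (r, ω)‖ = ((‖Kn n (r, ω)‖₊ : ℝ≥0∞)).toReal := by simp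
          _ ≤ (L (r, ω)).toReal := ENNReal.toReal_mono hω.ne h1
      · filter_upwards [hLlt] with ω hω using hK'_lim (r, ω) hω
    -- the truncation identity for Ln
    have hint_mu_n : ∀ n : ℕ,
        ∫ x : S × A, min |h (x.1, x.2, r)| n ∂μ r = ∫ ω, Ln n (r, ω) ∂P := by
      intro n
      have hgc : Continuous fun x : S × A => min |h (x.1, x.2, r)| n :=
        hhc'.abs.min continuous_const
      have hb : ∀ x : S × A, ‖min |h (x.1, x.2, r)| n‖ ≤ n := fun x => by
        rw [Real.norm_eq_abs, abs_of_nonneg (le_min (abs_nonneg _) (Nat.cast_nonneg n))]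
        exact min_le_right _ _
      have hconv := hμdef r hr0 (BoundedContinuousFunction.ofNormedAddCommGroup _ hgc n hb)
      simp only [BoundedContinuousFunction.coe_ofNormedAddCommGroup] at hconv
      rw [hconv]
      refine integral_congr_ae (Eventually.of_forall fun ω => ?_)
      rw [hLndef]
      dsimp only
      rw [hcr]
    -- monotonicity of Ln
    have hLn_mono : ∀ ω, Monotone fun n => Ln n (r, ω) := by
      intro ω n k hnk
      have := hκprob (r, ω)
      refine integral_mono (aux_min_int _ _ (hh_cont.comp (continuous_const.prodMk
        (continuous_id.prodMk continuous_const))) n) (aux_min_int _ _ (hh_cont.comp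
        (continuous_const.prodMk (continuous_id.prodMk continuous_const))) k)
        (fun a => min_le_min le_rfl (Nat.cast_le.2 hnk))
    have hLn_nonneg : ∀ n ω, 0 ≤ Ln n (r, ω) := fun n ω =>
      integral_nonneg fun a => le_min (abs_nonneg _) (Nat.cast_nonneg n)
    have hLn_le_n : ∀ n ω, Ln n (r, ω) ≤ n := by
      intro n ω
      have := hκprob (r, ω)
      calc Ln n (r, ω) ≤ ∫ _, (n : ℝ) ∂π (c r) ω :=
          integral_mono (aux_min_int _ _ (hh_cont.comp (continuous_const.prodMk
            (continuous_id.prodMk continuous_const))) n) (integrable_const _)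
            (fun a => min_le_right _ _)
        _ = n := by simp
    -- lintegral identity against μ r
    have key : ∫⁻ x : S × A, ENNReal.ofReal |h (x.1, x.2, r)| ∂μ r = ∫⁻ ω, L (r, ω) ∂P := by
      have h1 : ∫⁻ x : S × A, ENNReal.ofReal |h (x.1, x.2, r)| ∂μ r
          = ⨆ n : ℕ, ∫⁻ x : S × A, ENNReal.ofReal (min |h (x.1, x.2, r)| n) ∂μ r := by
        rw [← lintegral_iSup]
        · exact lintegral_congr fun x => (hsup_ofReal _ (abs_nonneg _)).symm
        · exact fun n => ((hhc'.abs.min continuous_const).measurable).ennreal_ofReal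
        · intro n k hnk x
          exact ENNReal.ofReal_le_ofReal (min_le_min le_rfl (Nat.cast_le.2 hnk))
      have h2 : ∀ n : ℕ, ∫⁻ x : S × A, ENNReal.ofReal (min |h (x.1, x.2, r)| n) ∂μ r
          = ∫⁻ ω, ENNReal.ofReal (Ln n (r, ω)) ∂P := by
        intro n
        have := hμprob r
        have hIint : Integrable (fun x : S × A => min |h (x.1, x.2, r)| (n : ℝ)) (μ r) :=
          @aux_min_int (S × A) _ _ _ (μ r) (hμprob r) (fun x => h (x.1, x.2, r)) hhc' n
        rw [← ofReal_integral_eq_lintegral_ofReal hIint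
          (Eventually.of_forall fun x => le_min (abs_nonneg _) (Nat.cast_nonneg n)),
          hint_mu_n n]
        refine ofReal_integral_eq_lintegral_ofReal ?_ (Eventually.of_forall fun ω => hLn_nonneg n ω)
        refine Integrable.mono' (integrable_const (n : ℝ))
          (hLn_slice n).aestronglyMeasurable (Eventually.of_forall fun ω => ?_)
        rw [Real.norm_eq_abs, abs_of_nonneg (hLn_nonneg n ω)]
        exact hLn_le_n n ω
      have h3 : (⨆ n : ℕ, ∫⁻ ω, ENNReal.ofReal (Ln n (r, ω)) ∂P)
          = ∫⁻ ω, L (r, ω) ∂P := by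
        rw [← lintegral_iSup (fun n => (hLn_slice n).ennreal_ofReal)
          (fun n k hnk ω => ENNReal.ofReal_le_ofReal (hLn_mono ω hnk))]
        exact lintegral_congr fun ω => by rw [← hL_eq (r, ω)]
      rw [h1]
      rw [iSup_congr h2]
      exact h3
    have hint_h : Integrable (fun x : S × A => h (x.1, x.2, r)) (μ r) := by
      refine ⟨hhc'.aestronglyMeasurable, ?_⟩
      rw [HasFiniteIntegral]
      refine lt_of_le_of_lt (le_of_eq (lintegral_congr fun x => ?_)) (key ▸ hfin)
      rw [Real.enorm_eq_ofReal_abs]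
    -- Step C: convergence of the μ r averages
    have stepC : Tendsto (fun n => ∫ x : S × A, hn n (x.1, x.2, r) ∂μ r) atTop
        (𝓝 (∫ x : S × A, h (x.1, x.2, r) ∂μ r)) := by
      apply tendsto_integral_of_dominated_convergence (bound := fun x => |h (x.1, x.2, r)|)
      · exact fun n => ((hn_cont n).comp (continuous_fst.prodMk
          (continuous_snd.prodMk continuous_const))).aestronglyMeasurable
      · exact hint_h.abs
      · exact fun n => Eventually.of_forall fun x => by
          rw [Real.norm_eq_abs]; exact hn_le n _
      · exact Eventually.of_forall fun x => hn_tendsto _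
    have stepC' : Tendsto (fun n => ∫ ω, Kn n (r, ω) ∂P) atTop
        (𝓝 (∫ x : S × A, h (x.1, x.2, r) ∂μ r)) := by
      simp_rw [← stepA]
      exact stepC
    exact tendsto_nhds_unique stepB stepC'
  -- final assembly
  calc (∫ x, f x ∂((μ t).map Prod.fst)) - ∫ x, f x ∂υ
      = (∫ ω, f (s t ω) ∂P) - ∫ ω, f (s 0 ω) ∂P := by rw [hFt, hF0]
    _ = ∫ ω, (∫ r in Set.Ioc (0:ℝ) t, ∫ a, h (s r ω, a, r) ∂π r ω) ∂P := EQ2.symm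
    _ = ∫ ω, (∫ r in Set.Ioc (0:ℝ) t, K' (r, ω)) ∂P := by
        refine integral_congr_ae (Eventually.of_forall fun ω => ?_)
        refine setIntegral_congr_fun measurableSet_Ioc fun r hr => ?_
        rw [hK'def]
        dsimp only
        rw [hc_id r hr]
    _ = ∫ r in Set.Ioc (0:ℝ) t, (∫ ω, K' (r, ω) ∂P) := integral_integral_swap hK'_int.swap
    _ = ∫ r in Set.Ioc (0:ℝ) t, ∫ x : S × A, h (x.1, x.2, r) ∂μ r := integral_congr_ae EQ4
end

section
/- Let p ∈ [1,∞) and let (μ_n)_{n∈ℕ} and μ be Borel probability measures on ℝ, each with finite p-th moment, such that μ_n converges weakly to μ and ∫ |x|^p dμ_n(x) → ∫ |x|^p dμ(x). Then there exist a probability space (Ω̃, Σ̃, P̃) and real-valued random variables (X̃_n)_{n∈ℕ} and X̃ on it with law(X̃_n) = μ_n for all n and law(X̃) = μ, such that X̃_n → X̃ almost surely and E[ |X̃_n − X̃|^p ] → 0. -/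
open MeasureTheory Filter
open scoped Topology ENNReal

section SkorokhodAux

open Set ProbabilityTheory

/-- The (left-continuous generalized inverse) quantile function of a measure on `ℝ`. -/
noncomputable def sqf (μ : Measure ℝ) (u : ℝ) : ℝ := sInf {x | u ≤ cdf μ x}

/-- The quantile function, set to `0` outside `(0,1)`. -/
noncomputable def sqf' (μ : Measure ℝ) (u : ℝ) : ℝ :=
  if u ∈ Ioo (0:ℝ) 1 then sqf μ u else 0

variable (μ : Measure ℝ) [IsProbabilityMeasure μ] {u x : ℝ}

omit [IsProbabilityMeasure μ] in
lemma sqf_set_nonempty (h1 : u < 1) : {x | u ≤ cdf μ x}.Nonempty := by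
  obtain ⟨x, hx⟩ := ((tendsto_cdf_atTop μ).eventually (eventually_ge_nhds h1)).exists
  exact ⟨x, hx⟩

omit [IsProbabilityMeasure μ] in
lemma sqf_bddBelow (h0 : 0 < u) : BddBelow {x | u ≤ cdf μ x} := by
  obtain ⟨y, hy⟩ := ((tendsto_cdf_atBot μ).eventually (eventually_lt_nhds h0)).exists
  refine ⟨y, fun z hz => ?_⟩
  by_contra h
  push_neg at h
  exact absurd (le_trans hz ((monotone_cdf μ) h.le)) (not_le.mpr hy)

omit [IsProbabilityMeasure μ] in
lemma sqf_le_iff (h0 : 0 < u) (h1 : u < 1) : sqf μ u ≤ x ↔ u ≤ cdf μ x := by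
  constructor
  · intro h
    have key : ∀ y ∈ Ioi x, u ≤ cdf μ y := by
      intro y hy
      obtain ⟨z, hz, hzy⟩ := exists_lt_of_csInf_lt (sqf_set_nonempty μ h1) (lt_of_le_of_lt h hy)
      exact le_trans hz ((monotone_cdf μ) hzy.le)
    have h2 : Tendsto (cdf μ) (𝓝[>] x) (𝓝 (cdf μ x)) :=
      ((cdf μ).right_continuous x).mono_left (nhdsWithin_mono x Ioi_subset_Ici_self)
    exact ge_of_tendsto h2 (eventually_nhdsWithin_of_forall key)
  · intro h
    exact csInf_le (sqf_bddBelow μ h0) h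

omit [IsProbabilityMeasure μ] in
lemma measurable_sqf' : Measurable (sqf' μ) := by
  apply measurable_of_Iic
  intro a
  have : sqf' μ ⁻¹' Iic a =
      (Ioo (0:ℝ) 1 ∩ Iic (cdf μ a)) ∪ ((Ioo (0:ℝ) 1)ᶜ ∩ {u : ℝ | (0:ℝ) ≤ a}) := by
    ext u
    by_cases hu : u ∈ Ioo (0:ℝ) 1
    · simp [sqf', hu, sqf_le_iff μ hu.1 hu.2]
    · simp [sqf', hu]
  rw [this]
  exact ((measurableSet_Ioo.inter measurableSet_Iic).union
    (measurableSet_Ioo.compl.inter (MeasurableSet.const _)))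

lemma isProbabilityMeasure_restrict01 :
    IsProbabilityMeasure ((volume : Measure ℝ).restrict (Ioo 0 1)) := by
  constructor
  rw [Measure.restrict_apply_univ, Real.volume_Ioo]
  norm_num

lemma map_sqf' : ((volume : Measure ℝ).restrict (Ioo 0 1)).map (sqf' μ) = μ := by
  have hm := measurable_sqf' μ
  haveI := isProbabilityMeasure_restrict01
  haveI : IsProbabilityMeasure (((volume : Measure ℝ).restrict (Ioo 0 1)).map (sqf' μ)) :=
    Measure.isProbabilityMeasure_map hm.aemeasurable
  refine Measure.ext_of_Iic _ _ (fun a => ?_)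
  rw [Measure.map_apply hm measurableSet_Iic,
    Measure.restrict_apply (hm measurableSet_Iic)]
  have hpre : sqf' μ ⁻¹' Iic a ∩ Ioo 0 1 = Ioo (0:ℝ) 1 ∩ Iic (cdf μ a) := by
    ext u
    constructor
    · rintro ⟨h1, h2⟩
      refine ⟨h2, ?_⟩
      rw [mem_preimage, mem_Iic, sqf', if_pos h2] at h1
      exact (sqf_le_iff μ h2.1 h2.2).mp h1
    · rintro ⟨h2, h1⟩
      refine ⟨?_, h2⟩
      rw [mem_preimage, mem_Iic, sqf', if_pos h2]
      exact (sqf_le_iff μ h2.1 h2.2).mpr h1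
  rw [hpre, ← ofReal_cdf]
  rcases lt_or_ge (cdf μ a) 1 with h | h
  · have : Ioo (0:ℝ) 1 ∩ Iic (cdf μ a) = Ioc 0 (cdf μ a) := by
      ext u
      simp only [mem_inter_iff, mem_Ioo, mem_Iic, mem_Ioc]
      exact ⟨fun ⟨⟨h1, _⟩, h3⟩ => ⟨h1, h3⟩, fun ⟨h1, h3⟩ => ⟨⟨h1, lt_of_le_of_lt h3 h⟩, h3⟩⟩
    rw [this, Real.volume_Ioc, sub_zero]
  · have h1 : cdf μ a = 1 := le_antisymm (cdf_le_one μ a) h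
    have : Ioo (0:ℝ) 1 ∩ Iic (cdf μ a) = Ioo 0 1 := by
      rw [h1]
      exact inter_eq_left.mpr (fun u hu => le_of_lt hu.2)
    rw [this, Real.volume_Ioo, h1, sub_zero]

/-- From weak convergence, cdf's converge at non-atoms of the limit. -/
lemma cdf_tendsto_of_weak (μ : ℕ → Measure ℝ) (ν : Measure ℝ)
    (hμprob : ∀ n, IsProbabilityMeasure (μ n)) (hνprob : IsProbabilityMeasure ν)
    (hweak : ∀ f : BoundedContinuousFunction ℝ ℝ,
      Tendsto (fun n => ∫ x, f x ∂(μ n)) atTop (𝓝 (∫ x, f x ∂ν)))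
    {x : ℝ} (hx : ν {x} = 0) :
    Tendsto (fun n => cdf (μ n) x) atTop (𝓝 (cdf ν x)) := by
  haveI := hνprob
  let P : ℕ → ProbabilityMeasure ℝ := fun n => ⟨μ n, hμprob n⟩
  let Q : ProbabilityMeasure ℝ := ⟨ν, hνprob⟩
  have hconv : Tendsto P atTop (𝓝 Q) :=
    ProbabilityMeasure.tendsto_iff_forall_integral_tendsto.mpr hweak
  have hnull : Q (frontier (Iic x)) = 0 := by
    simp only [frontier_Iic]
    simp [Q, ProbabilityMeasure.coeFn_def, hx]
  have key := ProbabilityMeasure.tendsto_measure_of_null_frontier_of_tendsto hconv hnull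
  have key2 : Tendsto (fun n => ((P n (Iic x) : NNReal) : ℝ)) atTop
      (𝓝 ((Q (Iic x) : NNReal) : ℝ)) := NNReal.tendsto_coe.mpr key
  have e1 : ∀ n, ((P n (Iic x) : NNReal) : ℝ) = cdf (μ n) x := by
    intro n
    haveI := hμprob n
    rw [cdf_eq_real]
    rfl
  have e2 : ((Q (Iic x) : NNReal) : ℝ) = cdf ν x := by
    rw [cdf_eq_real]
    rfl
  simpa [e2] using key2.congr (fun n => e1 n)

/-- The set of points of `(0,1)` where the quantile function is badly discontinuous from the
right is countable. -/
lemma countable_bad (ν : Measure ℝ) :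
    Set.Countable {u : ℝ | u ∈ Ioo (0:ℝ) 1 ∧
      ∃ ε > 0, ∀ u' ∈ Ioo u 1, sqf ν u + ε ≤ sqf ν u'} := by
  set Bad := {u : ℝ | u ∈ Ioo (0:ℝ) 1 ∧
      ∃ ε > 0, ∀ u' ∈ Ioo u 1, sqf ν u + ε ≤ sqf ν u'} with hBad
  have hq : ∀ u ∈ Bad, ∃ q : ℚ, sqf ν u < q ∧ ∀ u' ∈ Ioo u 1, (q:ℝ) ≤ sqf ν u' := by
    rintro u ⟨hu, ε, hε, h⟩
    obtain ⟨q, hq1, hq2⟩ := exists_rat_btwn (lt_add_of_pos_right (sqf ν u) hε)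
    exact ⟨q, hq1, fun u' hu' => le_trans hq2.le (h u' hu')⟩
  choose! fq hq1 hq2 using hq
  have key : ∀ u₁ ∈ Bad, ∀ u₂ ∈ Bad, u₁ < u₂ → fq u₁ < fq u₂ := by
    intro u₁ h₁ u₂ h₂ hlt
    have e1 : (fq u₁ : ℝ) ≤ sqf ν u₂ := hq2 u₁ h₁ u₂ ⟨hlt, h₂.1.2⟩
    have e2 : sqf ν u₂ < fq u₂ := hq1 u₂ h₂
    exact_mod_cast lt_of_le_of_lt e1 e2
  have hinj : InjOn (fun u => Encodable.encode (fq u)) Bad := by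
    intro u₁ h₁ u₂ h₂ heq
    have : fq u₁ = fq u₂ := Encodable.encode_injective heq
    rcases lt_trichotomy u₁ u₂ with h | h | h
    · exact absurd this (ne_of_lt (key u₁ h₁ u₂ h₂ h))
    · exact h
    · exact absurd this.symm (ne_of_lt (key u₂ h₂ u₁ h₁ h))
  exact Set.countable_iff_exists_injOn.mpr ⟨_, hinj⟩

/-- Quantile functions converge at good points. -/
lemma tendsto_sqf (μ : ℕ → Measure ℝ) (ν : Measure ℝ) [IsProbabilityMeasure ν]
    (hμprob : ∀ n, IsProbabilityMeasure (μ n))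
    (hdense : Dense {x : ℝ | 0 < ν {x}}ᶜ)
    (hcdf : ∀ x ∉ {x : ℝ | 0 < ν {x}}, Tendsto (fun n => cdf (μ n) x) atTop (𝓝 (cdf ν x)))
    {u : ℝ} (hu : u ∈ Ioo (0:ℝ) 1)
    (hgood : ∀ ε > 0, ∃ u' ∈ Ioo u 1, sqf ν u' < sqf ν u + ε) :
    Tendsto (fun n => sqf (μ n) u) atTop (𝓝 (sqf ν u)) := by
  rw [tendsto_order]
  constructor
  · intro a ha
    obtain ⟨x, hxD, hx⟩ := hdense.exists_mem_open isOpen_Ioo (nonempty_Ioo.mpr ha)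
    have hFx : cdf ν x < u := by
      by_contra h
      push_neg at h
      exact absurd ((sqf_le_iff ν hu.1 hu.2).mpr h) (not_le.mpr hx.2)
    filter_upwards [(hcdf x hxD).eventually (eventually_lt_nhds hFx)] with n hn
    haveI := hμprob n
    have : ¬ (sqf (μ n) u ≤ x) := fun h =>
      absurd ((sqf_le_iff (μ n) hu.1 hu.2).mp h) (not_le.mpr hn)
    exact lt_trans hx.1 (not_le.mp this)
  · intro b hb
    obtain ⟨u', hu', hGu'⟩ := hgood (b - sqf ν u) (sub_pos.mpr hb)
    rw [add_sub_cancel] at hGu'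
    obtain ⟨x, hxD, hx⟩ := hdense.exists_mem_open isOpen_Ioo (nonempty_Ioo.mpr hGu')
    have hu'2 : u' ∈ Ioo (0:ℝ) 1 := ⟨lt_trans hu.1 hu'.1, hu'.2⟩
    have h1 : u' ≤ cdf ν (sqf ν u') := (sqf_le_iff ν hu'2.1 hu'2.2).mp le_rfl
    have h2 : u < cdf ν x :=
      lt_of_lt_of_le hu'.1 (le_trans h1 ((monotone_cdf ν) hx.1.le))
    filter_upwards [(hcdf x hxD).eventually (eventually_gt_nhds h2)] with n hn
    haveI := hμprob n
    exact lt_of_le_of_lt ((sqf_le_iff (μ n) hu.1 hu.2).mpr hn.le) hx.2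

lemma abs_sub_rpow_le (p : ℝ) (hp : 0 ≤ p) (a b : ℝ) :
    |a - b| ^ p ≤ 2 ^ p * (|a| ^ p + |b| ^ p) := by
  have h1 : |a - b| ≤ 2 * max |a| |b| := by
    have := abs_sub a b
    rcases le_total |a| |b| with h | h
    · rw [max_eq_right h]; linarith
    · rw [max_eq_left h]; linarith
  have h2 : (max |a| |b|) ^ p ≤ |a| ^ p + |b| ^ p := by
    rcases le_total |a| |b| with h | h
    · rw [max_eq_right h]
      exact le_add_of_nonneg_left (Real.rpow_nonneg (abs_nonneg _) _)
    · rw [max_eq_left h]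
      exact le_add_of_nonneg_right (Real.rpow_nonneg (abs_nonneg _) _)
  calc |a - b| ^ p ≤ (2 * max |a| |b|) ^ p :=
        Real.rpow_le_rpow (abs_nonneg _) h1 hp
    _ = 2 ^ p * (max |a| |b|) ^ p :=
        Real.mul_rpow (by norm_num) (le_max_of_le_left (abs_nonneg _))
    _ ≤ 2 ^ p * (|a| ^ p + |b| ^ p) := by
        exact mul_le_mul_of_nonneg_left h2 (Real.rpow_nonneg (by norm_num) _)

/-- Generalized dominated convergence: a.e. convergence plus convergence of `p`-th moments
gives convergence of `p`-th moments of differences to zero. -/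
lemma tendsto_lintegral_rpow_sub {Ω : Type} [MeasurableSpace Ω] (P : Measure Ω)
    (p : ℝ) (hp : 1 ≤ p)
    (X : ℕ → Ω → ℝ) (X' : Ω → ℝ) (hmX : ∀ n, Measurable (X n)) (hmX' : Measurable X')
    (hmomn : ∀ n, ∫⁻ ω, ENNReal.ofReal (|X n ω| ^ p) ∂P < ⊤)
    (hmom' : ∫⁻ ω, ENNReal.ofReal (|X' ω| ^ p) ∂P < ⊤)
    (hmom : Tendsto (fun n => ∫⁻ ω, ENNReal.ofReal (|X n ω| ^ p) ∂P) atTop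
      (𝓝 (∫⁻ ω, ENNReal.ofReal (|X' ω| ^ p) ∂P)))
    (hae : ∀ᵐ ω ∂P, Tendsto (fun n => X n ω) atTop (𝓝 (X' ω))) :
    Tendsto (fun n => ∫⁻ ω, ENNReal.ofReal (|X n ω - X' ω| ^ p) ∂P) atTop (𝓝 0) := by
  have hp0 : (0:ℝ) < p := lt_of_lt_of_le zero_lt_one hp
  have hcont : Continuous fun x : ℝ => |x| ^ p :=
    continuous_abs.rpow_const (fun x => Or.inr hp0.le)
  have hφcont : Continuous fun x : ℝ => ENNReal.ofReal (|x| ^ p) :=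
    ENNReal.continuous_ofReal.comp hcont
  have hφmeas : Measurable fun x : ℝ => ENNReal.ofReal (|x| ^ p) := hφcont.measurable
  set φ : ℝ → ℝ≥0∞ := fun x => ENNReal.ofReal (|x| ^ p) with hφ
  set d : ℕ → Ω → ℝ≥0∞ := fun n ω => ENNReal.ofReal (|X n ω - X' ω| ^ p) with hd
  set g : ℕ → Ω → ℝ≥0∞ := fun n ω => ENNReal.ofReal (2 ^ p) * (φ (X n ω) + φ (X' ω)) with hg
  set gl : Ω → ℝ≥0∞ := fun ω => ENNReal.ofReal (2 ^ p) * (φ (X' ω) + φ (X' ω)) with hgl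
  have hdmeas : ∀ n, Measurable (d n) := fun n => hφmeas.comp ((hmX n).sub hmX')
  have hgmeas : ∀ n, Measurable (g n) :=
    fun n => (measurable_const.mul ((hφmeas.comp (hmX n)).add (hφmeas.comp hmX')))
  have hdle : ∀ n ω, d n ω ≤ g n ω := by
    intro n ω
    have := abs_sub_rpow_le p hp0.le (X n ω) (X' ω)
    calc d n ω ≤ ENNReal.ofReal (2 ^ p * (|X n ω| ^ p + |X' ω| ^ p)) :=
          ENNReal.ofReal_le_ofReal this
      _ = g n ω := by
          rw [ENNReal.ofReal_mul (Real.rpow_nonneg (by norm_num) _),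
            ENNReal.ofReal_add (Real.rpow_nonneg (abs_nonneg _) _)
              (Real.rpow_nonneg (abs_nonneg _) _)]
  have hgint : ∀ n, ∫⁻ ω, g n ω ∂P =
      ENNReal.ofReal (2 ^ p) * ((∫⁻ ω, φ (X n ω) ∂P) + ∫⁻ ω, φ (X' ω) ∂P) := by
    intro n
    have m1 : Measurable fun ω => φ (X n ω) := hφmeas.comp (hmX n)
    have m2 : Measurable fun ω => φ (X' ω) := hφmeas.comp hmX'
    rw [lintegral_const_mul _ (show Measurable fun ω => φ (X n ω) + φ (X' ω) from m1.add m2), lintegral_add_left m1]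
  have hglint : ∫⁻ ω, gl ω ∂P =
      ENNReal.ofReal (2 ^ p) * ((∫⁻ ω, φ (X' ω) ∂P) + ∫⁻ ω, φ (X' ω) ∂P) := by
    have m2 : Measurable fun ω => φ (X' ω) := hφmeas.comp hmX'
    rw [lintegral_const_mul _ (show Measurable fun ω => φ (X' ω) + φ (X' ω) from m2.add m2), lintegral_add_left m2]
  set L : ℝ≥0∞ := ENNReal.ofReal (2 ^ p) * ((∫⁻ ω, φ (X' ω) ∂P) + ∫⁻ ω, φ (X' ω) ∂P) with hL
  have hLne : L ≠ ∞ := by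
    apply ENNReal.mul_ne_top ENNReal.ofReal_ne_top
    exact ENNReal.add_ne_top.mpr ⟨hmom'.ne, hmom'.ne⟩
  have hgtend : Tendsto (fun n => ∫⁻ ω, g n ω ∂P) atTop (𝓝 L) := by
    simp only [hgint]
    exact ENNReal.Tendsto.const_mul (hmom.add tendsto_const_nhds)
      (Or.inr ENNReal.ofReal_ne_top)
  have hgfin : ∀ n, ∫⁻ ω, g n ω ∂P ≠ ∞ := by
    intro n
    rw [hgint]
    exact ENNReal.mul_ne_top ENNReal.ofReal_ne_top
      (ENNReal.add_ne_top.mpr ⟨(hmomn n).ne, hmom'.ne⟩)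
  set A : ℕ → ℝ≥0∞ := fun n => ∫⁻ ω, (g n ω - d n ω) ∂P with hA
  have hsplit : ∀ n, ∫⁻ ω, g n ω ∂P = A n + ∫⁻ ω, d n ω ∂P := by
    intro n
    rw [hA, ← lintegral_add_left (show Measurable fun ω => g n ω - d n ω from (hgmeas n).sub (hdmeas n))]
    apply lintegral_congr
    intro ω
    exact (tsub_add_cancel_of_le (hdle n ω)).symm
  have hAle : ∀ n, A n ≤ ∫⁻ ω, g n ω ∂P := fun n => (hsplit n) ▸ le_self_add
  have hAne : ∀ n, A n ≠ ∞ := fun n => (lt_of_le_of_lt (hAle n) (hgfin n).lt_top).ne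
  have hptw : ∀ᵐ ω ∂P, Tendsto (fun n => g n ω - d n ω) atTop (𝓝 (gl ω)) := by
    filter_upwards [hae] with ω hω
    have h1 : Tendsto (fun n => g n ω) atTop (𝓝 (gl ω)) := by
      apply ENNReal.Tendsto.const_mul _ (Or.inr ENNReal.ofReal_ne_top)
      exact Tendsto.add ((hφcont.tendsto _).comp hω) tendsto_const_nhds
    have h2 : Tendsto (fun n => d n ω) atTop (𝓝 0) := by
      have h3 : Tendsto (fun n => X n ω - X' ω) atTop (𝓝 0) := by
        simpa using hω.sub (tendsto_const_nhds (x := X' ω))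
      have h4 := (hφcont.tendsto 0).comp h3
      simpa [φ, hd, Function.comp_def, Real.zero_rpow hp0.ne'] using h4
    have := ENNReal.Tendsto.sub h1 h2 (Or.inr (by simp))
    simpa using this
  have hliminf : L ≤ liminf A atTop := by
    have e1 : ∫⁻ ω, gl ω ∂P = ∫⁻ ω, liminf (fun n => g n ω - d n ω) atTop ∂P :=
      lintegral_congr_ae (hptw.mono fun ω h => h.liminf_eq.symm)
    calc L = ∫⁻ ω, gl ω ∂P := hglint.symm
      _ = ∫⁻ ω, liminf (fun n => g n ω - d n ω) atTop ∂P := e1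
      _ ≤ liminf A atTop := lintegral_liminf_le (fun n => (hgmeas n).sub (hdmeas n))
  have hlimsup : limsup A atTop ≤ L := by
    calc limsup A atTop ≤ limsup (fun n => ∫⁻ ω, g n ω ∂P) atTop :=
          limsup_le_limsup (Eventually.of_forall hAle)
      _ = L := hgtend.limsup_eq
  have hAtend : Tendsto A atTop (𝓝 L) :=
    tendsto_of_le_liminf_of_limsup_le hliminf hlimsup
  have hdeq : ∀ n, ∫⁻ ω, d n ω ∂P = ∫⁻ ω, g n ω ∂P - A n := by
    intro n
    rw [hsplit n, ENNReal.add_sub_cancel_left (hAne n)]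
  have : Tendsto (fun n => ∫⁻ ω, g n ω ∂P - A n) atTop (𝓝 (L - L)) :=
    ENNReal.Tendsto.sub hgtend hAtend (Or.inl hLne)
  rw [tsub_self] at this
  exact this.congr (fun n => (hdeq n).symm)

end SkorokhodAux

/-- Skorokhod representation with convergence of `p`-th moments: if Borel
probability measures `μ_n` on `ℝ` with finite `p`-th moments converge weakly to `μ` and their
`p`-th absolute moments converge to that of `μ`, then there are random variables `X̃_n`, `X̃` on
a common probability space with `law(X̃_n) = μ_n`, `law(X̃) = μ`, `X̃_n → X̃` a.s., and
`E[|X̃_n − X̃|^p] → 0`. -/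
theorem statement17 (p : ℝ) (hp : 1 ≤ p)
    (μ : ℕ → Measure ℝ) (ν : Measure ℝ)
    (hμprob : ∀ n, IsProbabilityMeasure (μ n)) (hνprob : IsProbabilityMeasure ν)
    (hμmom : ∀ n, (∫⁻ x, ENNReal.ofReal (|x| ^ p) ∂(μ n)) < ⊤)
    (hνmom : (∫⁻ x, ENNReal.ofReal (|x| ^ p) ∂ν) < ⊤)
    (hweak : ∀ f : BoundedContinuousFunction ℝ ℝ,
      Tendsto (fun n => ∫ x, f x ∂(μ n)) atTop (𝓝 (∫ x, f x ∂ν)))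
    (hmom : Tendsto (fun n => ∫⁻ x, ENNReal.ofReal (|x| ^ p) ∂(μ n)) atTop
      (𝓝 (∫⁻ x, ENNReal.ofReal (|x| ^ p) ∂ν))) :
    ∃ (Ω : Type) (mΩ : MeasurableSpace Ω) (P : Measure Ω), IsProbabilityMeasure P ∧
      ∃ (X : ℕ → Ω → ℝ) (X' : Ω → ℝ),
        (∀ n, Measurable (X n)) ∧ Measurable X' ∧
        (∀ n, P.map (X n) = μ n) ∧ P.map X' = ν ∧
        (∀ᵐ ω ∂P, Tendsto (fun n => X n ω) atTop (𝓝 (X' ω))) ∧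
        Tendsto (fun n => ∫ ω, |X n ω - X' ω| ^ p ∂P) atTop (𝓝 0) := by
  classical
  haveI := hνprob
  have hp0 : (0:ℝ) < p := lt_of_lt_of_le zero_lt_one hp
  set P : Measure ℝ := (volume : Measure ℝ).restrict (Set.Ioo 0 1) with hP
  haveI hPprob : IsProbabilityMeasure P := isProbabilityMeasure_restrict01
  set X : ℕ → ℝ → ℝ := fun n => sqf' (μ n) with hX
  set X' : ℝ → ℝ := sqf' ν with hX'
  have hmX : ∀ n, Measurable (X n) := fun n => measurable_sqf' (μ n)
  have hmX' : Measurable X' := measurable_sqf' ν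
  have hmap : ∀ n, P.map (X n) = μ n := by
    intro n
    haveI := hμprob n
    exact map_sqf' (μ n)
  have hmap' : P.map X' = ν := map_sqf' ν
  -- a.e. convergence
  have hDc : Set.Countable {x : ℝ | 0 < ν {x}} :=
    MeasureTheory.Measure.countable_meas_pos_of_disjoint_iUnion
      (As := fun x : ℝ => {x}) (fun x => measurableSet_singleton x)
      (fun a b hab => by simpa [Function.onFun] using Set.disjoint_singleton.mpr hab)
  have hdense : Dense {x : ℝ | 0 < ν {x}}ᶜ := hDc.dense_compl ℝ
  have hcdf : ∀ x ∉ {x : ℝ | 0 < ν {x}},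
      Tendsto (fun n => ProbabilityTheory.cdf (μ n) x) atTop
        (𝓝 (ProbabilityTheory.cdf ν x)) := by
    intro x hx
    exact cdf_tendsto_of_weak μ ν hμprob hνprob hweak
      (le_antisymm (not_lt.mp hx) (zero_le))
  set Bad := {u : ℝ | u ∈ Set.Ioo (0:ℝ) 1 ∧
      ∃ ε > 0, ∀ u' ∈ Set.Ioo u 1, sqf ν u + ε ≤ sqf ν u'} with hBadDef
  have hBad0 : P Bad = 0 := by
    have h1 : P Bad ≤ (volume : Measure ℝ) Bad := by
      rw [hP, Measure.restrict_apply' measurableSet_Ioo]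
      exact measure_mono Set.inter_subset_left
    have h2 : (volume : Measure ℝ) Bad = 0 := (countable_bad ν).measure_zero _
    exact le_antisymm (h1.trans h2.le) (zero_le)
  have hae : ∀ᵐ u ∂P, Tendsto (fun n => X n u) atTop (𝓝 (X' u)) := by
    have h1 : ∀ᵐ u ∂P, u ∈ Set.Ioo (0:ℝ) 1 := ae_restrict_mem measurableSet_Ioo
    have h2 : ∀ᵐ u ∂P, u ∉ Bad := by
      rw [ae_iff]
      simpa using hBad0
    filter_upwards [h1, h2] with u hu hnb
    have hgood : ∀ ε > 0, ∃ u' ∈ Set.Ioo u 1, sqf ν u' < sqf ν u + ε := by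
      intro ε hε
      by_contra h
      push_neg at h
      exact hnb ⟨hu, ε, hε, fun u' hu' => (h u' hu')⟩
    have hconv := tendsto_sqf μ ν hμprob hdense hcdf hu hgood
    have e1 : ∀ n, X n u = sqf (μ n) u := fun n => if_pos hu
    have e2 : X' u = sqf ν u := if_pos hu
    rw [e2]
    exact hconv.congr (fun n => (e1 n).symm)
  refine ⟨ℝ, inferInstance, P, hPprob, X, X', hmX, hmX', hmap, hmap', hae, ?_⟩
  -- moment convergence
  have hφmeas : Measurable fun x : ℝ => ENNReal.ofReal (|x| ^ p) :=
    (ENNReal.continuous_ofReal.comp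
      (continuous_abs.rpow_const (fun x => Or.inr hp0.le))).measurable
  have hIeq : ∀ n, ∫⁻ ω, ENNReal.ofReal (|X n ω| ^ p) ∂P
      = ∫⁻ x, ENNReal.ofReal (|x| ^ p) ∂(μ n) := by
    intro n
    rw [← hmap n, lintegral_map hφmeas (hmX n)]
  have hJeq : ∫⁻ ω, ENNReal.ofReal (|X' ω| ^ p) ∂P
      = ∫⁻ x, ENNReal.ofReal (|x| ^ p) ∂ν := by
    rw [← hmap', lintegral_map hφmeas hmX']
  have hlim0 : Tendsto (fun n => ∫⁻ ω, ENNReal.ofReal (|X n ω - X' ω| ^ p) ∂P)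
      atTop (𝓝 0) := by
    apply tendsto_lintegral_rpow_sub P p hp X X' hmX hmX'
    · intro n; rw [hIeq n]; exact hμmom n
    · rw [hJeq]; exact hνmom
    · simp only [hIeq, hJeq]; exact hmom
    · exact hae
  have heq : ∀ n, ∫ ω, |X n ω - X' ω| ^ p ∂P
      = (∫⁻ ω, ENNReal.ofReal (|X n ω - X' ω| ^ p) ∂P).toReal := by
    intro n
    apply integral_eq_lintegral_of_nonneg_ae
    · exact Filter.Eventually.of_forall
        (fun ω => Real.rpow_nonneg (abs_nonneg _) _)
    · exact ((continuous_abs.rpow_const (fun x => Or.inr hp0.le)).measurable.comp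
        ((hmX n).sub hmX')).aestronglyMeasurable
  simp only [heq]
  have := (ENNReal.tendsto_toReal (a := 0) (by simp)).comp hlim0
  simpa [Function.comp_def] using this
end
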